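/- arXiv:1503.09108 — 10 statements merged into one kernel-verified Lean document; each statement's English description precedes it below -/
import Mathlib

section
/- Let n ≥ 1, let F be a C^∞ function on an open set Ω ⊆ ℝ^{n+1}, and let p ∈ Ω be a regular point of F (∇F(p) ≠ 0). Set E := −|∇F(p)|⁻¹∇F(p), H := Hess F(p), and define the (n+1)×(n+1) matrix Π := |∇F(p)|⁻¹ ( H − (HE)Eᵀ − E(HE)ᵀ + (EᵀHE)·EEᵀ ). Then ΠE = 0 and det(Π + EEᵀ) · |∇F(p)|^{n+2} = U(F)(p). (The restriction of Π to the tangent hyperplane ker dF(p) of the level set of F through p is the second fundamental form of the level set with respect to the Euclidean unit normal E, so det(Π + EEᵀ) is the Gauss–Kronecker curvature K of the level set at p, and the identity reads U(F) = K·|∇F|^{n+2}.) -/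
open Matrix

noncomputable def pd1 {ι : Type*} [Fintype ι] [DecidableEq ι]
    (F : (ι → ℝ) → ℝ) (i : ι) (x : ι → ℝ) : ℝ :=
  fderiv ℝ F x (Pi.single i 1)

noncomputable def gradv {ι : Type*} [Fintype ι] [DecidableEq ι]
    (F : (ι → ℝ) → ℝ) (x : ι → ℝ) : ι → ℝ :=
  fun i => pd1 F i x

noncomputable def hessM {ι : Type*} [Fintype ι] [DecidableEq ι]
    (F : (ι → ℝ) → ℝ) (x : ι → ℝ) : Matrix ι ι ℝ :=
  Matrix.of fun i j => pd1 (pd1 F j) i x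

noncomputable def Hdet {ι : Type*} [Fintype ι] [DecidableEq ι]
    (F : (ι → ℝ) → ℝ) (x : ι → ℝ) : ℝ :=
  (hessM F x).det

noncomputable def Nvec {ι : Type*} [Fintype ι] [DecidableEq ι]
    (F : (ι → ℝ) → ℝ) (x : ι → ℝ) : ι → ℝ :=
  (hessM F x).adjugate *ᵥ gradv F x

noncomputable def Uval {ι : Type*} [Fintype ι] [DecidableEq ι]
    (F : (ι → ℝ) → ℝ) (x : ι → ℝ) : ℝ :=
  gradv F x ⬝ᵥ Nvec F x

section Aux

open Polynomial

set_option linter.unusedSectionVars false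

variable {ι : Type*} [Fintype ι] [DecidableEq ι]

lemma vecMulVec_mulVec' (u v x : ι → ℝ) : vecMulVec u v *ᵥ x = (v ⬝ᵥ x) • u := by
  ext i
  simp [mulVec, vecMulVec, dotProduct, Finset.mul_sum, mul_comm, mul_left_comm]

/-- invertible case of matrix determinant lemma -/
lemma det_add_vecMulVec_of_isUnit {B : Matrix ι ι ℝ} (hB : IsUnit B.det) (u v : ι → ℝ) :
    (B + vecMulVec u v).det = B.det + v ⬝ᵥ (B.adjugate *ᵥ u) := by
  rw [vecMulVec_eq Unit, Matrix.det_add_replicateCol_mul_replicateRow hB]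
  have h1 : (1 + replicateRow Unit v * B⁻¹ * replicateCol Unit u).det
      = 1 + v ⬝ᵥ (B⁻¹ *ᵥ u) := by
    rw [det_unique]
    simp only [Matrix.add_apply, Matrix.one_apply_eq, Matrix.mul_apply, replicateRow_apply, replicateCol_apply,
      dotProduct, mulVec]
    congr 1
    simp only [Finset.sum_mul, Finset.mul_sum]
    rw [Finset.sum_comm]
    apply Finset.sum_congr rfl; intros; apply Finset.sum_congr rfl; intros; ring
  rw [h1, mul_add, mul_one]
  congr 1
  have hadj : B.det • B⁻¹ = B.adjugate := by
    rw [Matrix.inv_def, smul_smul, Ring.mul_inverse_cancel _ hB, one_smul]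
  rw [← hadj, Matrix.smul_mulVec, dotProduct_smul, smul_eq_mul]

lemma eval_charpoly' (A : Matrix ι ι ℝ) (r : ℝ) :
    ((-A).charpoly).eval r = (A + r • (1 : Matrix ι ι ℝ)).det := by
  rw [Matrix.charpoly, Matrix.charmatrix]
  rw [show (Polynomial.eval r : ℝ[X] → ℝ) = (Polynomial.evalRingHom r : ℝ[X] →+* ℝ) from rfl,
    RingHom.map_det]
  congr 1
  ext i j
  by_cases h : i = j <;>
    simp [h, Matrix.scalar, Matrix.one_apply, Matrix.diagonal_apply, add_comm]

lemma dense_unit_det (A : Matrix ι ι ℝ) :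
    Dense {ε : ℝ | IsUnit (A + ε • (1 : Matrix ι ι ℝ)).det} := by
  have hq : (-A).charpoly ≠ 0 := ((-A).charpoly_monic).ne_zero
  have hfin : Set.Finite {x : ℝ | ((-A).charpoly).IsRoot x} :=
    Polynomial.finite_setOf_isRoot hq
  refine (hfin.countable.dense_compl ℝ).mono ?_
  intro x hx
  simp only [Set.mem_compl_iff, Set.mem_setOf_eq, Polynomial.IsRoot] at hx ⊢
  rw [isUnit_iff_ne_zero, ← eval_charpoly']
  exact hx

/-- The matrix determinant lemma, general version. -/
lemma det_add_vecMulVec (A : Matrix ι ι ℝ) (u v : ι → ℝ) :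
    (A + vecMulVec u v).det = A.det + v ⬝ᵥ (A.adjugate *ᵥ u) := by
  have hcm : Continuous fun ε : ℝ => A + ε • (1 : Matrix ι ι ℝ) := by
    apply continuous_const.add
    exact continuous_id.smul continuous_const
  have hf : Continuous fun ε : ℝ => (A + ε • (1 : Matrix ι ι ℝ) + vecMulVec u v).det :=
    (hcm.add continuous_const).matrix_det
  have hg : Continuous fun ε : ℝ =>
      (A + ε • (1 : Matrix ι ι ℝ)).det + v ⬝ᵥ ((A + ε • (1 : Matrix ι ι ℝ)).adjugate *ᵥ u) := by
    refine hcm.matrix_det.add ?_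
    exact (continuous_const : Continuous fun _ : ℝ => v).dotProduct
      (hcm.matrix_adjugate.matrix_mulVec continuous_const)
  have heq : (fun ε : ℝ => (A + ε • (1 : Matrix ι ι ℝ) + vecMulVec u v).det)
      = fun ε : ℝ => (A + ε • (1 : Matrix ι ι ℝ)).det
          + v ⬝ᵥ ((A + ε • (1 : Matrix ι ι ℝ)).adjugate *ᵥ u) := by
    apply Continuous.ext_on (dense_unit_det A) hf hg
    intro ε hε
    exact det_add_vecMulVec_of_isUnit hε u v
  have := congrFun heq 0
  simpa using this

lemma adjugate_one_sub_vecMulVec {E : ι → ℝ} (hEE : E ⬝ᵥ E = 1) :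
    (1 - vecMulVec E E).adjugate = vecMulVec E E := by
  set Q : Matrix ι ι ℝ := vecMulVec E E with hQ
  have hQQ : Q * Q = Q := by
    ext i j
    simp only [hQ, Matrix.mul_apply, vecMulVec_apply]
    calc ∑ k, E i * E k * (E k * E j) = (E i * E j) * ∑ k, E k * E k := by
          rw [Finset.mul_sum]; apply Finset.sum_congr rfl; intros; ring
      _ = E i * E j := by rw [show ∑ k, E k * E k = E ⬝ᵥ E from rfl, hEE, mul_one]
  have key : ∀ t : ℝ, t ≠ 1 → (1 - t • Q).adjugate = (1 - t) • 1 + t • Q := by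
    intro t ht
    have h1t : (1 : ℝ) - t ≠ 0 := sub_ne_zero.mpr (Ne.symm ht)
    have hdet : (1 - t • Q).det = 1 - t := by
      have h2 : (1 : Matrix ι ι ℝ) - t • Q = 1 + replicateCol Unit ((-t) • E) * replicateRow Unit E := by
        rw [← vecMulVec_eq Unit]
        ext i j
        simp [vecMulVec_apply, hQ, sub_eq_add_neg]
      rw [h2, det_one_add_replicateCol_mul_replicateRow]
      have : E ⬝ᵥ (-t) • E = -t := by rw [dotProduct_smul, hEE]; simp
      rw [this]; ring
    set s : ℝ := t / (1 - t) with hs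
    have hinv : (1 - t • Q) * (1 + s • Q) = 1 := by
      have expand : (1 - t • Q) * (1 + s • Q)
          = 1 + (s - t - t * s) • Q := by
        rw [Matrix.sub_mul, Matrix.one_mul, Matrix.mul_add, Matrix.mul_one,
          Matrix.smul_mul, Matrix.mul_smul, hQQ, smul_smul]
        rw [sub_smul, sub_smul]
        abel
      rw [expand]
      have hst : s * (1 - t) = t := div_mul_cancel₀ _ h1t
      have : s - t - t * s = 0 := by linear_combination hst
      rw [this, zero_smul, add_zero]
    have hunit : IsUnit (1 - t • Q).det := by
      rw [hdet, isUnit_iff_ne_zero]; exact h1t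
    have hinv' : (1 - t • Q)⁻¹ = 1 + s • Q := Matrix.inv_eq_right_inv hinv
    have hadj : (1 - t • Q).adjugate = (1 - t • Q).det • (1 - t • Q)⁻¹ := by
      rw [Matrix.inv_def, smul_smul, Ring.mul_inverse_cancel _ hunit, one_smul]
    rw [hadj, hinv', hdet, smul_add, smul_smul]
    have hst : s * (1 - t) = t := div_mul_cancel₀ _ h1t
    have : (1 - t) * s = t := by linear_combination hst
    rw [this]
  -- continuity
  have hcont1 : Continuous fun t : ℝ => (1 - t • Q).adjugate := by
    have : Continuous fun t : ℝ => (1 : Matrix ι ι ℝ) - t • Q :=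
      continuous_const.sub (continuous_id.smul continuous_const)
    exact this.matrix_adjugate
  have hcont2 : Continuous fun t : ℝ => ((1 : ℝ) - t) • (1 : Matrix ι ι ℝ) + t • Q := by
    exact ((continuous_const.sub continuous_id).smul continuous_const).add
      (continuous_id.smul continuous_const)
  have heq := Continuous.ext_on (dense_compl_singleton (1 : ℝ)) hcont1 hcont2
    (fun t ht => key t ht)
  have h1 := congrFun heq 1
  simpa using h1

lemma mul_vecMulVec (A : Matrix ι ι ℝ) (u v : ι → ℝ) :
    A * vecMulVec u v = vecMulVec (A *ᵥ u) v := by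
  ext i j
  simp [Matrix.mul_apply, vecMulVec_apply, mulVec, dotProduct, Finset.sum_mul, mul_assoc]

lemma vecMulVec_mul (A : Matrix ι ι ℝ) (u v : ι → ℝ) :
    vecMulVec u v * A = vecMulVec u (v ᵥ* A) := by
  ext i j
  simp [Matrix.mul_apply, vecMulVec_apply, vecMul, dotProduct, Finset.mul_sum, mul_assoc]

lemma key_alg {H : Matrix ι ι ℝ} (hsym : Hᵀ = H) {E : ι → ℝ} (hEE : E ⬝ᵥ E = 1) (t : ℝ) :
    (H - vecMulVec (H *ᵥ E) E - vecMulVec E (H *ᵥ E) + (E ⬝ᵥ (H *ᵥ E)) • vecMulVec E E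
      + t • vecMulVec E E).det = t * (E ⬝ᵥ (H.adjugate *ᵥ E)) := by
  set Q : Matrix ι ι ℝ := vecMulVec E E with hQ
  set P : Matrix ι ι ℝ := 1 - Q with hP
  have hs' : ∀ a b, H a b = H b a := fun a b => by
    conv_lhs => rw [← hsym, transpose_apply]
  have hvm : E ᵥ* H = H *ᵥ E := by
    ext j
    simp only [vecMul, mulVec, dotProduct]
    apply Finset.sum_congr rfl
    intro x _
    rw [hs' x j]; ring
  have hQH : Q * H = vecMulVec E (H *ᵥ E) := by rw [hQ, _root_.vecMulVec_mul, hvm]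
  have hHQ : H * Q = vecMulVec (H *ᵥ E) E := by rw [hQ, _root_.mul_vecMulVec]
  have hQHQ : Q * H * Q = (E ⬝ᵥ (H *ᵥ E)) • Q := by
    rw [hQH, hQ, _root_.vecMulVec_mul]
    have : (H *ᵥ E) ᵥ* vecMulVec E E = (E ⬝ᵥ (H *ᵥ E)) • E := by
      ext k
      simp [vecMul, vecMulVec_apply, dotProduct, Finset.sum_mul, mul_comm, mul_left_comm]
      rw [Finset.mul_sum]
      apply Finset.sum_congr rfl; intros; ring
    rw [this]
    ext i j
    simp [vecMulVec_apply, smul_eq_mul]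
    ring
  have hPHP : P * H * P = H - vecMulVec (H *ᵥ E) E - vecMulVec E (H *ᵥ E)
      + (E ⬝ᵥ (H *ᵥ E)) • Q := by
    have expand : (1 - Q) * H * (1 - Q) = H - Q * H - H * Q + Q * H * Q := by
      noncomm_ring
    rw [hP, expand, hQHQ, hQH, hHQ]
    abel
  rw [← hPHP]
  -- matrix determinant lemma
  have hsmul : t • Q = vecMulVec (t • E) E := by
    ext i j; simp [vecMulVec_apply, hQ, smul_eq_mul]; ring
  rw [hsmul, det_add_vecMulVec]
  -- det (P*H*P) = 0
  have hPE : P *ᵥ E = 0 := by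
    rw [hP, Matrix.sub_mulVec, Matrix.one_mulVec, hQ, vecMulVec_mulVec', hEE, one_smul, sub_self]
  have hEne : E ≠ 0 := by
    intro h
    rw [h] at hEE
    simp [dotProduct] at hEE
  have hdet0 : (P * H * P).det = 0 := by
    rw [← Matrix.exists_mulVec_eq_zero_iff]
    exact ⟨E, hEne, by rw [← Matrix.mulVec_mulVec, hPE, Matrix.mulVec_zero]⟩
  -- adjugate of P*H*P
  have hadjP : P.adjugate = Q := by rw [hP, hQ]; exact adjugate_one_sub_vecMulVec hEE
  have hadj : (P * H * P).adjugate = Q * H.adjugate * Q := by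
    rw [Matrix.adjugate_mul_distrib, Matrix.adjugate_mul_distrib, hadjP, Matrix.mul_assoc]
  have hQE : Q *ᵥ E = E := by rw [hQ, vecMulVec_mulVec', hEE, one_smul]
  rw [hdet0, hadj, zero_add]
  rw [Matrix.mulVec_smul]
  rw [show (Q * H.adjugate * Q) *ᵥ E = Q *ᵥ (H.adjugate *ᵥ (Q *ᵥ E)) by
    rw [Matrix.mulVec_mulVec, Matrix.mulVec_mulVec]]
  rw [hQE, hQ, vecMulVec_mulVec']
  rw [dotProduct_smul, smul_eq_mul, dotProduct_smul, smul_eq_mul, hEE, mul_one]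

lemma hess_symm {ι : Type*} [Fintype ι] [DecidableEq ι] {Ω : Set (ι → ℝ)} (hΩ : IsOpen Ω)
    {F : (ι → ℝ) → ℝ} (hF : ContDiffOn ℝ (⊤ : ℕ∞) F Ω) {p : ι → ℝ} (hp : p ∈ Ω) :
    (hessM F p)ᵀ = hessM F p := by
  have hF' : ContDiffAt ℝ (⊤ : ℕ∞) F p := hF.contDiffAt (hΩ.mem_nhds hp)
  have h2 : (2 : WithTop ℕ∞) ≤ ((⊤ : ℕ∞) : WithTop ℕ∞) :=
    ENat.natCast_le_of_coe_top_le_withTop le_rfl 2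
  have hsymm : IsSymmSndFDerivAt ℝ F p := hF'.isSymmSndFDerivAt (by rw [minSmoothness_of_isRCLikeNormedField]; exact h2)
  have hdiff : DifferentiableAt ℝ (fderiv ℝ F) p := by
    have := hF'.fderiv_right (m := (1 : ℕ∞)) (ENat.natCast_le_of_coe_top_le_withTop le_rfl 2)
    exact this.differentiableAt (by simp)
  have key : ∀ i j : ι, pd1 (pd1 F j) i p
      = fderiv ℝ (fderiv ℝ F) p (Pi.single i 1) (Pi.single j 1) := by
    intro i j
    have : fderiv ℝ (fun y => (fderiv ℝ F y) (Pi.single j 1)) p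
        = ((fderiv ℝ F p).comp (fderiv ℝ (fun _ : ι → ℝ => Pi.single j (1:ℝ)) p))
          + (fderiv ℝ (fderiv ℝ F) p).flip (Pi.single j 1) :=
      fderiv_clm_apply hdiff (differentiableAt_const _)
    show fderiv ℝ (pd1 F j) p (Pi.single i 1) = _
    rw [show pd1 F j = (fun y => (fderiv ℝ F y) (Pi.single j 1)) from rfl, this]
    simp [ContinuousLinearMap.flip_apply]
  ext i j
  simp only [transpose_apply, hessM, Matrix.of_apply]
  rw [key, key]
  exact hsymm _ _

end Aux

/-- Reilly's identity `U(F) = K · |∇F|^(n+2)` relating `U(F)` to the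
Gauss–Kronecker curvature of the level set of `F` through a regular point `p`. -/
theorem stmt1 (n : ℕ) (hn : 1 ≤ n)
    (Ω : Set (Fin (n+1) → ℝ)) (hΩ : IsOpen Ω)
    (F : (Fin (n+1) → ℝ) → ℝ) (hF : ContDiffOn ℝ (⊤ : ℕ∞) F Ω)
    (p : Fin (n+1) → ℝ) (hp : p ∈ Ω) (hreg : gradv F p ≠ 0)
    (nrm : ℝ) (hnrm : nrm = Real.sqrt (gradv F p ⬝ᵥ gradv F p))
    (E : Fin (n+1) → ℝ) (hE : E = (-nrm⁻¹) • gradv F p)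
    (H : Matrix (Fin (n+1)) (Fin (n+1)) ℝ) (hH : H = hessM F p)
    (PiM : Matrix (Fin (n+1)) (Fin (n+1)) ℝ)
    (hPiM : PiM = nrm⁻¹ • (H - vecMulVec (H *ᵥ E) E - vecMulVec E (H *ᵥ E)
      + (E ⬝ᵥ (H *ᵥ E)) • vecMulVec E E)) :
    PiM *ᵥ E = 0 ∧ (PiM + vecMulVec E E).det * nrm ^ (n+2) = Uval F p := by
  set g : Fin (n+1) → ℝ := gradv F p with hg
  have hgg : 0 < g ⬝ᵥ g := by
    have : g ⬝ᵥ star g = g ⬝ᵥ g := by simp [star]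
    rw [← this]
    exact Matrix.dotProduct_self_star_pos_iff.mpr hreg
  have hnrm0 : 0 < nrm := by rw [hnrm]; exact Real.sqrt_pos.mpr hgg
  have hnrmne : nrm ≠ 0 := ne_of_gt hnrm0
  have hnrm2 : nrm * nrm = g ⬝ᵥ g := by
    rw [hnrm]; exact Real.mul_self_sqrt hgg.le
  have hEE : E ⬝ᵥ E = 1 := by
    rw [hE, smul_dotProduct, dotProduct_smul, smul_eq_mul, smul_eq_mul, ← hnrm2]
    field_simp
  have hsym : Hᵀ = H := by rw [hH]; exact hess_symm hΩ hF hp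
  constructor
  · rw [hPiM, Matrix.smul_mulVec, Matrix.add_mulVec, Matrix.sub_mulVec, Matrix.sub_mulVec,
      vecMulVec_mulVec', vecMulVec_mulVec', Matrix.smul_mulVec, vecMulVec_mulVec',
      hEE, one_smul, one_smul, dotProduct_comm (H *ᵥ E) E]
    rw [show H *ᵥ E - H *ᵥ E - (E ⬝ᵥ (H *ᵥ E)) • E + (E ⬝ᵥ (H *ᵥ E)) • E = 0 by abel, smul_zero]
  · -- main determinant identity
    have hscaled : nrm • (PiM + vecMulVec E E)
        = H - vecMulVec (H *ᵥ E) E - vecMulVec E (H *ᵥ E)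
          + (E ⬝ᵥ (H *ᵥ E)) • vecMulVec E E + nrm • vecMulVec E E := by
      rw [hPiM, smul_add, smul_smul, mul_inv_cancel₀ hnrmne, one_smul]
    have hdetscaled : (nrm • (PiM + vecMulVec E E)).det
        = nrm ^ (n+1) * (PiM + vecMulVec E E).det := by
      rw [Matrix.det_smul, Fintype.card_fin]
    have hkey := key_alg hsym hEE nrm
    rw [hscaled, hkey] at hdetscaled
    -- hdetscaled : nrm * (E ⬝ᵥ adj H *ᵥ E) = nrm^(n+1) * det(...)
    have hgE : g = (-nrm) • E := by
      rw [hE, smul_smul]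
      have : -nrm * -nrm⁻¹ = 1 := by field_simp
      rw [this, one_smul]
    have hU : Uval F p = nrm * nrm * (E ⬝ᵥ (H.adjugate *ᵥ E)) := by
      show g ⬝ᵥ ((hessM F p).adjugate *ᵥ g) = _
      rw [← hH, hgE, smul_dotProduct, Matrix.mulVec_smul, dotProduct_smul]
      rw [smul_eq_mul, smul_eq_mul]
      ring
    rw [hU]
    have : (PiM + vecMulVec E E).det * nrm ^ (n + 2)
        = (nrm ^ (n+1) * (PiM + vecMulVec E E).det) * nrm := by ring
    rw [this, ← hdetscaled]
    ring
end

section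
/- Let n ≥ 1, let F be a C^∞ function on an open set Ω ⊆ ℝ^{n+1}, and let p ∈ Ω. Then U(F)(p) ≠ 0 if and only if ∇F(p) ≠ 0 and the symmetric bilinear form (v,w) ↦ vᵀ·Hess F(p)·w is nondegenerate when restricted to the hyperplane ker dF(p) = { v ∈ ℝ^{n+1} : ⟨∇F(p), v⟩ = 0 } (i.e., for every nonzero v in this hyperplane there is w in the hyperplane with vᵀ·Hess F(p)·w ≠ 0). -/
open Matrix

set_option linter.unusedSectionVars false

section BorderAux
open Polynomial
variable {ι : Type*} [Fintype ι] [DecidableEq ι]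

lemma row_mul_col_apply' (u v : ι → ℝ) (M : Matrix ι ι ℝ) :
    (Matrix.replicateRow Unit u * M * Matrix.replicateCol Unit v) () () = u ⬝ᵥ M *ᵥ v := by
  rw [Matrix.dotProduct_mulVec]
  simp [Matrix.mul_apply, Matrix.vecMul, dotProduct, Finset.sum_mul]

lemma border_det_inv (B : Matrix ι ι ℝ) [Invertible B] (g : ι → ℝ) :
    (Matrix.fromBlocks B (Matrix.replicateCol Unit g) (Matrix.replicateRow Unit g)
      (0 : Matrix Unit Unit ℝ)).det = -(g ⬝ᵥ B.adjugate *ᵥ g) := by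
  haveI : Invertible B.det := B.detInvertibleOfInvertible
  rw [Matrix.det_fromBlocks₁₁]
  have h1 : (0 - Matrix.replicateRow Unit g * ⅟B * Matrix.replicateCol Unit g).det
      = -(g ⬝ᵥ (⅟B) *ᵥ g) := by
    rw [Matrix.det_unique]
    simp [row_mul_col_apply']
  rw [h1]
  have h2 : B.adjugate = B.det • ⅟B := by
    rw [Matrix.invOf_eq, smul_smul, mul_invOf_self, one_smul]
  rw [h2, Matrix.smul_mulVec, dotProduct_smul]
  simp [mul_comm]

lemma eval_det_add_smul_one (B : Matrix ι ι ℝ) (ε : ℝ) :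
    ((-B).charpoly).eval ε = (B + ε • (1 : Matrix ι ι ℝ)).det := by
  rw [Matrix.charpoly, eval_det, matPolyEquiv_charmatrix, eval_sub, eval_X, eval_C]
  congr 1
  ext i j
  by_cases h : i = j
  · simp [h, Matrix.scalar_apply, Matrix.smul_apply, Matrix.one_apply, Matrix.diagonal,
      Matrix.sub_apply, Matrix.neg_apply, Matrix.add_apply, Matrix.of_apply]
    ring
  · simp [h, Matrix.scalar_apply, Matrix.smul_apply, Matrix.one_apply, Matrix.diagonal,
      Matrix.sub_apply, Matrix.neg_apply, Matrix.add_apply, Matrix.of_apply]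

lemma border_det (B : Matrix ι ι ℝ) (g : ι → ℝ) :
    (Matrix.fromBlocks B (Matrix.replicateCol Unit g) (Matrix.replicateRow Unit g)
      (0 : Matrix Unit Unit ℝ)).det = -(g ⬝ᵥ B.adjugate *ᵥ g) := by
  set f : ℝ → ℝ := fun ε =>
    (Matrix.fromBlocks (B + ε • 1) (Matrix.replicateCol Unit g) (Matrix.replicateRow Unit g)
      (0 : Matrix Unit Unit ℝ)).det + (g ⬝ᵥ (B + ε • 1).adjugate *ᵥ g) with hf
  have hB : Continuous fun ε : ℝ => B + ε • (1 : Matrix ι ι ℝ) :=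
    continuous_const.add (continuous_id.smul continuous_const)
  have hcont : Continuous f := by
    apply Continuous.add
    · apply Continuous.matrix_det
      apply continuous_matrix
      rintro (i | i) (j | j)
      · exact (hB.matrix_elem i j)
      · exact continuous_const
      · exact continuous_const
      · exact continuous_const
    · apply continuous_finset_sum
      intro i _
      apply Continuous.mul continuous_const
      apply continuous_finset_sum
      intro j _
      exact (hB.matrix_adjugate.matrix_elem i j).mul continuous_const
  have hS : Set.Finite {ε : ℝ | (B + ε • (1 : Matrix ι ι ℝ)).det = 0} := by
    apply Set.Finite.subset (Polynomial.finite_setOf_isRoot ((-B).charpoly_monic.ne_zero))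
    intro ε hε
    simp only [Set.mem_setOf_eq, Polynomial.IsRoot, eval_det_add_smul_one]
    exact hε
  have hdense : Dense ({ε : ℝ | (B + ε • (1 : Matrix ι ι ℝ)).det = 0})ᶜ :=
    Set.Countable.dense_compl ℝ hS.countable
  have hzero : ∀ ε ∈ ({ε : ℝ | (B + ε • (1 : Matrix ι ι ℝ)).det = 0})ᶜ, f ε = 0 := by
    intro ε hε
    simp only [Set.mem_compl_iff, Set.mem_setOf_eq] at hε
    haveI : Invertible (B + ε • (1 : Matrix ι ι ℝ)) :=
      (B + ε • 1).invertibleOfIsUnitDet (isUnit_iff_ne_zero.mpr hε)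
    simp only [hf, border_det_inv]
    ring
  have : f = fun _ => (0 : ℝ) := by
    apply Continuous.ext_on hdense hcont continuous_const
    exact hzero
  have h0 := congrFun this 0
  simp only [hf, zero_smul, add_zero] at h0
  linarith [h0]


lemma key_lemma  (A : Matrix ι ι ℝ) (g : ι → ℝ) :
    g ⬝ᵥ A.adjugate *ᵥ g ≠ 0 ↔
      (g ≠ 0 ∧ ∀ v, g ⬝ᵥ v = 0 → v ≠ 0 →
        ∃ w, g ⬝ᵥ w = 0 ∧ v ⬝ᵥ (A *ᵥ w) ≠ 0) := by
  have hsymm : g ⬝ᵥ Aᵀ.adjugate *ᵥ g = g ⬝ᵥ A.adjugate *ᵥ g := by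
    rw [← Matrix.adjugate_transpose, Matrix.mulVec_transpose]
    rw [dotProduct_comm, ← Matrix.dotProduct_mulVec]
  set M := Matrix.fromBlocks Aᵀ (Matrix.replicateCol Unit g) (Matrix.replicateRow Unit g)
      (0 : Matrix Unit Unit ℝ) with hM
  have hdetM : M.det = -(g ⬝ᵥ A.adjugate *ᵥ g) := by
    rw [hM, border_det, hsymm]
  constructor
  · intro hs
    have hg : g ≠ 0 := by
      rintro rfl
      simp at hs
    refine ⟨hg, ?_⟩
    intro v hv hv0
    by_contra hcon
    push_neg at hcon
    set u := Aᵀ *ᵥ v with hu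
    have huw : ∀ w, g ⬝ᵥ w = 0 → u ⬝ᵥ w = 0 := by
      intro w hw
      have h1 : v ⬝ᵥ (A *ᵥ w) = u ⬝ᵥ w := by
        rw [Matrix.dotProduct_mulVec, hu, Matrix.mulVec_transpose]
      rw [← h1]
      exact hcon w hw
    have hgg : g ⬝ᵥ g ≠ 0 := by
      rw [Ne, dotProduct_self_eq_zero]
      exact hg
    set t := (u ⬝ᵥ g) / (g ⬝ᵥ g) with ht
    have hw0 : g ⬝ᵥ (u - t • g) = 0 := by
      rw [dotProduct_sub, dotProduct_smul, smul_eq_mul, ht,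
        dotProduct_comm g u]
      field_simp
      ring
    have h1 : u ⬝ᵥ (u - t • g) = 0 := huw _ hw0
    have h2 : (u - t • g) ⬝ᵥ (u - t • g) = 0 := by
      rw [sub_dotProduct, smul_dotProduct, h1, hw0, smul_eq_mul,
        mul_zero, sub_zero]
    have hu_eq : u = t • g := by
      have h3 := dotProduct_self_eq_zero.mp h2
      rwa [sub_eq_zero] at h3
    have hker : M.det = 0 := by
      apply Matrix.exists_mulVec_eq_zero_iff.mp
      refine ⟨Sum.elim v (fun _ => -t), ?_, ?_⟩
      · intro h0
        apply hv0
        funext i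
        exact congrFun h0 (Sum.inl i)
      · rw [hM, Matrix.fromBlocks_mulVec]
        simp only [Sum.elim_comp_inl, Sum.elim_comp_inr]
        funext z
        cases z with
        | inl i =>
          simp only [Sum.elim_inl, Pi.add_apply, Pi.zero_apply]
          have hcol : (Matrix.replicateCol Unit g *ᵥ fun _ => -t) i = -(t * g i) := by
            simp [Matrix.mulVec, dotProduct, Matrix.replicateCol_apply, mul_comm]
          rw [hcol]
          have h4 : (Aᵀ *ᵥ v) i = t * g i := by
            rw [← hu, hu_eq]; simp [smul_eq_mul]
          rw [h4]; ring
        | inr i =>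
          simp only [Sum.elim_inr, Pi.add_apply, Pi.zero_apply, Matrix.zero_mulVec]
          have hrow : (Matrix.replicateRow Unit g *ᵥ v) i = g ⬝ᵥ v := by
            simp [Matrix.mulVec, dotProduct, Matrix.replicateRow_apply]
          rw [hrow, hv]; simp
    rw [hdetM] at hker
    exact hs (neg_eq_zero.mp hker)
  · rintro ⟨hg, hnd⟩ hs
    have hker : M.det = 0 := by rw [hdetM, hs, neg_zero]
    obtain ⟨x, hx0, hxk⟩ := Matrix.exists_mulVec_eq_zero_iff.mpr hker
    set v := x ∘ Sum.inl with hvdef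
    set t := x (Sum.inr ()) with htdef
    have hxelim : x = Sum.elim v (fun _ => t) := by
      funext z
      cases z with
      | inl i => rfl
      | inr u => cases u; rfl
    rw [hxelim, hM, Matrix.fromBlocks_mulVec] at hxk
    simp only [Sum.elim_comp_inl, Sum.elim_comp_inr] at hxk
    have htop : ∀ i, (Aᵀ *ᵥ v) i + t * g i = 0 := by
      intro i
      have h5 := congrFun hxk (Sum.inl i)
      simp only [Sum.elim_inl, Pi.add_apply, Pi.zero_apply] at h5
      have hcol : (Matrix.replicateCol Unit g *ᵥ fun _ => t) i = t * g i := by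
        simp [Matrix.mulVec, dotProduct, Matrix.replicateCol_apply, mul_comm]
      rwa [hcol] at h5
    have hbot : g ⬝ᵥ v = 0 := by
      have h6 := congrFun hxk (Sum.inr ())
      simp only [Sum.elim_inr, Pi.add_apply, Pi.zero_apply, Matrix.zero_mulVec] at h6
      have hrow : (Matrix.replicateRow Unit g *ᵥ v) () = g ⬝ᵥ v := by
        simp [Matrix.mulVec, dotProduct, Matrix.replicateRow_apply]
      rw [hrow] at h6
      simpa using h6
    have hv0 : v ≠ 0 := by
      intro h0
      obtain ⟨i, hi⟩ : ∃ i, g i ≠ 0 := by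
        by_contra hall
        push_neg at hall
        exact hg (funext hall)
      have h7 := htop i
      rw [h0] at h7
      simp only [Matrix.mulVec_zero, Pi.zero_apply, zero_add] at h7
      have ht0 : t = 0 := by
        rcases mul_eq_zero.mp h7 with h | h
        · exact h
        · exact absurd h hi
      apply hx0
      funext z
      rw [hxelim]
      cases z with
      | inl j => simp [h0]
      | inr u => simp [ht0]
    obtain ⟨w, hw, hvw⟩ := hnd v hbot hv0
    apply hvw
    rw [Matrix.dotProduct_mulVec, ← Matrix.mulVec_transpose]
    have hAv : Aᵀ *ᵥ v = (-t) • g := by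
      funext i
      have h8 := htop i
      simp only [Pi.smul_apply, smul_eq_mul]
      linarith
    rw [hAv, smul_dotProduct, hw, smul_eq_mul, mul_zero]


end BorderAux

/-- `U(F)(p) ≠ 0` iff `p` is a regular point of `F` and the Hessian of `F`
restricts nondegenerately to the tangent hyperplane `ker dF(p)` of the level set. -/
theorem stmt2 (n : ℕ) (hn : 1 ≤ n)
    (Ω : Set (Fin (n+1) → ℝ)) (hΩ : IsOpen Ω)
    (F : (Fin (n+1) → ℝ) → ℝ) (hF : ContDiffOn ℝ (⊤ : ℕ∞) F Ω)
    (p : Fin (n+1) → ℝ) (hp : p ∈ Ω) :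
    Uval F p ≠ 0 ↔
      (gradv F p ≠ 0 ∧
        ∀ v : Fin (n+1) → ℝ, gradv F p ⬝ᵥ v = 0 → v ≠ 0 →
          ∃ w : Fin (n+1) → ℝ, gradv F p ⬝ᵥ w = 0 ∧ v ⬝ᵥ (hessM F p *ᵥ w) ≠ 0) := by
  simpa [Uval, Nvec] using key_lemma (hessM F p) (gradv F p)
end

section
/- Let n ≥ 1, let A be a real symmetric (n+1)×(n+1) matrix and f ∈ ℝ^{n+1}, and suppose u := fᵀ·(adj A)·f ≠ 0; set N := (adj A)·f. For any real q ≠ 0 define M_q := A − u⁻¹(det A)·ffᵀ + q·u⁻¹·ffᵀ. Then: (i) det M_q = q, so M_q is invertible; (ii) the matrix σ := M_q⁻¹ − q⁻¹u⁻¹·NNᵀ is independent of the choice of q ≠ 0; (iii) σ·f = 0; (iv) σ·(A − u⁻¹(det A)·ffᵀ) = I − u⁻¹·Nfᵀ, so the restriction of σ to the hyperplane f^⊥ inverts the restriction of A − u⁻¹(det A)·ffᵀ. -/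
set_option linter.unusedSectionVars false

open Matrix

section helpers
variable {m : Type*} [DecidableEq m] [Fintype m]

lemma my_det_add_indicator (f g : m → ℝ) (S : Finset m) :
    ∀ A : Matrix m m ℝ,
    (A + Matrix.of (fun i j => if i ∈ S then f i * g j else 0)).det
      = A.det + ∑ i ∈ S, f i * (A.updateRow i g).det := by
  induction S using Finset.induction_on with
  | empty => intro A; simp; congr 1; ext i j; simp
  | @insert j S hj ih =>
    intro A
    have h1 : A + Matrix.of (fun i k => if i ∈ insert j S then f i * g k else 0)
        = (A + Matrix.of (fun i k => if i ∈ S then f i * g k else 0)).updateRow j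
            (A j + f j • g) := by
      ext i k
      by_cases hij : i = j
      · subst hij
        simp [Matrix.updateRow_apply, hj]
      · simp [Matrix.updateRow_apply, hij, Finset.mem_insert]
    set B := A + Matrix.of (fun i k => if i ∈ S then f i * g k else 0) with hB
    have hBj : B j = A j := by
      ext k; simp [hB, hj]
    have h2 : B.updateRow j (A j) = B := by rw [← hBj, Matrix.updateRow_eq_self]
    have h3 : B.updateRow j g = (A.updateRow j g) + Matrix.of
        (fun i k => if i ∈ S then f i * g k else 0) := by
      ext i k
      by_cases hij : i = j
      · subst hij; simp [hj, hB]
      · simp [Matrix.updateRow_apply, hij, hB]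
    have h4 : (B.updateRow j g).det = (A.updateRow j g).det := by
      rw [h3, ih]
      have : ∀ i ∈ S, f i * ((A.updateRow j g).updateRow i g).det = 0 := by
        intro i hi
        have hij : i ≠ j := by rintro rfl; exact hj hi
        have : ((A.updateRow j g).updateRow i g).det = 0 := by
          apply Matrix.det_zero_of_row_eq hij
          simp [Matrix.updateRow_apply, hij, hij.symm]
        rw [this, mul_zero]
      rw [Finset.sum_eq_zero this, add_zero]
    rw [h1, Matrix.det_updateRow_add, Matrix.det_updateRow_smul, h2, h4, ih,
      Finset.sum_insert hj]
    ring

lemma my_det_lemma (A : Matrix m m ℝ) (f : m → ℝ) (c : ℝ) :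
    (A + c • vecMulVec f f).det = A.det + c * (f ⬝ᵥ A.adjugate *ᵥ f) := by
  have h1 : A + c • vecMulVec f f
      = A + Matrix.of (fun i j => if i ∈ (Finset.univ : Finset m)
          then (c * f i) * f j else 0) := by
    ext i j; simp [vecMulVec_apply]; ring
  rw [h1, my_det_add_indicator]
  congr 1
  have h2 : ∀ i, (A.updateRow i f).det = cramer Aᵀ f i := by
    intro i; rw [Matrix.cramer_transpose_apply]
  simp_rw [h2, Matrix.cramer_eq_adjugate_mulVec, ← Matrix.adjugate_transpose]
  simp only [← Matrix.adjugate_transpose, Matrix.mulVec, dotProduct,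
    Matrix.transpose_apply, Finset.mul_sum]
  rw [Finset.sum_comm]
  exact Finset.sum_congr rfl fun x _ => Finset.sum_congr rfl fun k _ => by ring

lemma my_vmv_mulVec (v w x : m → ℝ) : (vecMulVec v w) *ᵥ x = (w ⬝ᵥ x) • v := by
  ext i
  simp only [vecMulVec_apply, mulVec, dotProduct, Pi.smul_apply, smul_eq_mul,
    Finset.sum_mul]
  exact Finset.sum_congr rfl fun k _ => by ring

lemma my_vecMul_vmv (x v w : m → ℝ) : x ᵥ* (vecMulVec v w) = (x ⬝ᵥ v) • w := by
  ext j
  simp only [vecMulVec_apply, vecMul, dotProduct, Pi.smul_apply, smul_eq_mul,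
    Finset.sum_mul]
  exact Finset.sum_congr rfl fun k _ => by ring

lemma my_mul_vmv (X : Matrix m m ℝ) (v w : m → ℝ) :
    X * vecMulVec v w = vecMulVec (X *ᵥ v) w := by
  ext i j
  simp [vecMulVec_apply, mul_apply, mulVec, dotProduct, Finset.sum_mul, mul_assoc]

lemma my_vmv_mul (X : Matrix m m ℝ) (v w : m → ℝ) :
    vecMulVec v w * X = vecMulVec v (w ᵥ* X) := by
  ext i j
  simp [vecMulVec_apply, mul_apply, vecMul, dotProduct, Finset.mul_sum, mul_assoc]

lemma my_vmv_smul_left (a : ℝ) (v w : m → ℝ) :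
    vecMulVec (a • v) w = a • vecMulVec v w := by
  ext i j; simp [vecMulVec_apply, mul_assoc]

lemma my_vmv_smul_right (a : ℝ) (v w : m → ℝ) :
    vecMulVec v (a • w) = a • vecMulVec v w := by
  ext i j; simp [vecMulVec_apply]; ring

lemma my_vmv_transpose (v w : m → ℝ) : (vecMulVec v w)ᵀ = vecMulVec w v := by
  ext i j; simp [vecMulVec_apply, mul_comm]

lemma my_vmv_zero_left (w : m → ℝ) : vecMulVec (0 : m → ℝ) w = 0 := by
  ext i j; simp [vecMulVec_apply]

end helpers

/-- for a symmetric matrix `A` and a vector `f` with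
`u = fᵀ (adj A) f ≠ 0`, the matrices `M_q = A − u⁻¹(det A) f fᵀ + q u⁻¹ f fᵀ` have
determinant `q`, and `σ = M_q⁻¹ − q⁻¹ u⁻¹ N Nᵀ` (with `N = (adj A) f`) is independent
of `q`, annihilates `f`, and inverts `A − u⁻¹ (det A) f fᵀ` on the hyperplane `f^⊥`. -/
theorem stmt3 (n : ℕ) (hn : 1 ≤ n)
    (A : Matrix (Fin (n+1)) (Fin (n+1)) ℝ) (hA : A.IsSymm)
    (f : Fin (n+1) → ℝ)
    (u : ℝ) (hu : u = f ⬝ᵥ (A.adjugate *ᵥ f)) (hu0 : u ≠ 0)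
    (N : Fin (n+1) → ℝ) (hN : N = A.adjugate *ᵥ f)
    (M : ℝ → Matrix (Fin (n+1)) (Fin (n+1)) ℝ)
    (hM : ∀ q : ℝ, M q = A - (u⁻¹ * A.det) • vecMulVec f f + (q * u⁻¹) • vecMulVec f f) :
    (∀ q : ℝ, q ≠ 0 → (M q).det = q ∧ IsUnit (M q).det) ∧
    (∀ q q' : ℝ, q ≠ 0 → q' ≠ 0 →
      (M q)⁻¹ - (q⁻¹ * u⁻¹) • vecMulVec N N = (M q')⁻¹ - (q'⁻¹ * u⁻¹) • vecMulVec N N) ∧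
    (∀ q : ℝ, q ≠ 0 → ((M q)⁻¹ - (q⁻¹ * u⁻¹) • vecMulVec N N) *ᵥ f = 0) ∧
    (∀ q : ℝ, q ≠ 0 →
      ((M q)⁻¹ - (q⁻¹ * u⁻¹) • vecMulVec N N) * (A - (u⁻¹ * A.det) • vecMulVec f f)
        = 1 - u⁻¹ • vecMulVec N f) := by
  have hfN : f ⬝ᵥ N = u := by rw [hu, hN]
  have hNf : N ⬝ᵥ f = u := by rw [← hfN, dotProduct_comm]
  have hM' : ∀ q : ℝ, M q = A + ((q - A.det) * u⁻¹) • vecMulVec f f := by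
    intro q
    rw [hM q]
    ext i j
    simp only [Matrix.sub_apply, Matrix.add_apply, Matrix.smul_apply, smul_eq_mul]
    ring
  have hdet : ∀ q : ℝ, (M q).det = q := by
    intro q
    rw [hM' q, my_det_lemma, ← hu]
    field_simp
    ring
  have hunit : ∀ q : ℝ, q ≠ 0 → IsUnit (M q).det := by
    intro q hq; rw [hdet q]; exact isUnit_iff_ne_zero.mpr hq
  have hAN : A *ᵥ N = A.det • f := by
    rw [hN, Matrix.mulVec_mulVec, Matrix.mul_adjugate, Matrix.smul_mulVec,
      Matrix.one_mulVec]
  have hMN : ∀ q : ℝ, M q *ᵥ N = q • f := by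
    intro q
    rw [hM' q, Matrix.add_mulVec, Matrix.smul_mulVec, my_vmv_mulVec, hfN, hAN,
      smul_smul]
    have h5 : (q - A.det) * u⁻¹ * u = q - A.det := by field_simp
    rw [h5, ← add_smul]
    congr 1; ring
  have hMT : ∀ q : ℝ, (M q)ᵀ = M q := by
    intro q
    rw [hM' q, Matrix.transpose_add, Matrix.transpose_smul, hA, my_vmv_transpose]
  have hMinv_f : ∀ q : ℝ, q ≠ 0 → (M q)⁻¹ *ᵥ f = q⁻¹ • N := by
    intro q hq
    have h1 : N = q • ((M q)⁻¹ *ᵥ f) := by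
      calc N = ((M q)⁻¹ * M q) *ᵥ N := by
              rw [Matrix.nonsing_inv_mul _ (hunit q hq), Matrix.one_mulVec]
        _ = (M q)⁻¹ *ᵥ (M q *ᵥ N) := by rw [Matrix.mulVec_mulVec]
        _ = (M q)⁻¹ *ᵥ (q • f) := by rw [hMN q]
        _ = q • ((M q)⁻¹ *ᵥ f) := by rw [Matrix.mulVec_smul]
    rw [h1, smul_smul, inv_mul_cancel₀ hq, one_smul]
  have hf_Minv : ∀ q : ℝ, q ≠ 0 → f ᵥ* (M q)⁻¹ = q⁻¹ • N := by
    intro q hq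
    have h1 : ((M q)⁻¹)ᵀ = (M q)⁻¹ := by
      rw [Matrix.transpose_nonsing_inv, hMT]
    rw [← Matrix.mulVec_transpose, h1, hMinv_f q hq]
  have hNMq : ∀ q : ℝ, N ᵥ* M q = q • f := by
    intro q
    rw [← Matrix.mulVec_transpose, hMT, hMN]
  -- part (iii)
  have hσf : ∀ q : ℝ, q ≠ 0 →
      ((M q)⁻¹ - (q⁻¹ * u⁻¹) • vecMulVec N N) *ᵥ f = 0 := by
    intro q hq
    rw [Matrix.sub_mulVec, Matrix.smul_mulVec, my_vmv_mulVec, hNf,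
      hMinv_f q hq, smul_smul]
    have h5 : q⁻¹ * u⁻¹ * u = q⁻¹ := by
      rw [mul_assoc, inv_mul_cancel₀ hu0, mul_one]
    rw [h5, sub_self]
  refine ⟨fun q hq => ⟨hdet q, hunit q hq⟩, ?_, hσf, ?_⟩
  · -- part (ii)
    intro q q' hq hq'
    have key : (M q)⁻¹ - (M q')⁻¹ = ((q⁻¹ - q'⁻¹) * u⁻¹) • vecMulVec N N := by
      have e1 : (M q)⁻¹ * (M q' - M q) * (M q')⁻¹ = (M q)⁻¹ - (M q')⁻¹ := by
        rw [Matrix.mul_sub, Matrix.sub_mul,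
          Matrix.mul_nonsing_inv_cancel_right _ _ (hunit q' hq'),
          Matrix.nonsing_inv_mul _ (hunit q hq), Matrix.one_mul]
      have e2 : M q' - M q = ((q' - q) * u⁻¹) • vecMulVec f f := by
        rw [hM' q, hM' q']
        ext i j
        simp only [Matrix.sub_apply, Matrix.add_apply, Matrix.smul_apply, smul_eq_mul]
        ring
      rw [← e1, e2, Matrix.mul_smul, Matrix.smul_mul, my_mul_vmv, hMinv_f q hq,
        my_vmv_smul_left, Matrix.smul_mul, my_vmv_mul, hf_Minv q' hq',
        my_vmv_smul_right, smul_smul, smul_smul]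
      congr 1
      rw [inv_sub_inv hq hq', div_eq_mul_inv, mul_inv]
      ring
    have : (q⁻¹ - q'⁻¹) * u⁻¹ = q⁻¹ * u⁻¹ - q'⁻¹ * u⁻¹ := by ring
    rw [this, sub_smul] at key
    linear_combination (norm := abel) key
  · -- part (iv)
    intro q hq
    have hA' : A - (u⁻¹ * A.det) • vecMulVec f f
        = M q - (q * u⁻¹) • vecMulVec f f := by
      rw [hM q, add_sub_cancel_right]
    have e1 : ((M q)⁻¹ - (q⁻¹ * u⁻¹) • vecMulVec N N) * M q
        = 1 - u⁻¹ • vecMulVec N f := by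
      rw [Matrix.sub_mul, Matrix.nonsing_inv_mul _ (hunit q hq), Matrix.smul_mul,
        my_vmv_mul, hNMq q, my_vmv_smul_right, smul_smul]
      have h5 : q⁻¹ * u⁻¹ * q = u⁻¹ := by field_simp
      rw [h5]
    have e2 : ((M q)⁻¹ - (q⁻¹ * u⁻¹) • vecMulVec N N) * ((q * u⁻¹) • vecMulVec f f)
        = 0 := by
      rw [Matrix.mul_smul, my_mul_vmv, hσf q hq, my_vmv_zero_left, smul_zero]
    rw [hA', Matrix.mul_sub, e1, e2, sub_zero]
end

section
/- Let n ≥ 1, let A be a real symmetric (n+1)×(n+1) matrix and f ∈ ℝ^{n+1}, and suppose u := fᵀ·(adj A)·f ≠ 0; set N := (adj A)·f, and let σ := M_q⁻¹ − q⁻¹u⁻¹·NNᵀ for any q ≠ 0, where M_q := A − u⁻¹(det A)·ffᵀ + q·u⁻¹·ffᵀ (σ is independent of q). Then adj A − u⁻¹·NNᵀ = (det A)·σ. In particular, if det A = 0 then adj A = u⁻¹·NNᵀ and the rank of A equals n. -/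
open Matrix

section helpers

lemma vecMulVec_mul_mat {m n p : Type*} [Fintype p] (a : m → ℝ) (b : p → ℝ)
    (C : Matrix p n ℝ) : vecMulVec a b * C = vecMulVec a (b ᵥ* C) := by
  ext i j
  simp [Matrix.mul_apply, vecMulVec_apply, vecMul, dotProduct, Finset.mul_sum, mul_assoc]

lemma mat_mul_vecMulVec {m n p : Type*} [Fintype p] (C : Matrix m p ℝ) (a : p → ℝ)
    (b : n → ℝ) : C * vecMulVec a b = vecMulVec (C *ᵥ a) b := by
  ext i j
  simp [Matrix.mul_apply, vecMulVec_apply, mulVec, dotProduct, Finset.sum_mul, mul_assoc]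

lemma vecMulVec_smul_left {m n : Type*} (c : ℝ) (a : m → ℝ) (b : n → ℝ) :
    vecMulVec (c • a) b = c • vecMulVec a b := by
  ext i j; simp [vecMulVec_apply, mul_assoc]

lemma vecMul_vecMulVec {m n : Type*} [Fintype m] (x : m → ℝ) (a : m → ℝ) (b : n → ℝ) :
    x ᵥ* vecMulVec a b = (x ⬝ᵥ a) • b := by
  ext j
  simp only [vecMul, vecMulVec_apply, dotProduct, Pi.smul_apply, smul_eq_mul, Finset.sum_mul]
  exact Finset.sum_congr rfl fun k _ => by ring

set_option maxHeartbeats 800000 in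
lemma key_rank1 (n : ℕ) (A : Matrix (Fin (n+1)) (Fin (n+1)) ℝ) (hA : A.IsSymm)
    (hd : A.det = 0) (f : Fin (n+1) → ℝ)
    (hu0 : f ⬝ᵥ (A.adjugate *ᵥ f) ≠ 0) :
    ((f ⬝ᵥ (A.adjugate *ᵥ f)) • A.adjugate
      = vecMulVec (A.adjugate *ᵥ f) (A.adjugate *ᵥ f)) ∧ A.rank = n := by
  set B := A.adjugate with hBdef
  set N := B *ᵥ f with hNdef
  set u := f ⬝ᵥ N with hudef
  have hBs : ∀ i j, B i j = B j i := by
    intro i j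
    have : Bᵀ = B := by rw [hBdef, adjugate_transpose, hA.eq]
    conv_rhs => rw [← this]
    rfl
  have hAB : A * B = 0 := by rw [hBdef, mul_adjugate, hd, zero_smul]
  -- rank A = n
  have hBne : ∃ i j, B i j ≠ 0 := by
    by_contra h
    push_neg at h
    apply hu0
    have : B = 0 := by ext i j; exact h i j
    rw [hudef, hNdef, this]
    simp
  obtain ⟨i0, j0, hij⟩ := hBne
  have hsubdet : (A.submatrix j0.succAbove i0.succAbove).det ≠ 0 := by
    intro h
    apply hij
    rw [hBdef, adjugate_fin_succ_eq_det_submatrix, h, mul_zero]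
  have hrank_ge : n ≤ A.rank := by
    have h1 : (A.submatrix j0.succAbove i0.succAbove).rank = n := by
      rw [Matrix.rank_of_isUnit _ ((Matrix.isUnit_iff_isUnit_det _).2
        (isUnit_iff_ne_zero.2 hsubdet)), Fintype.card_fin]
    have h2 : A.submatrix j0.succAbove i0.succAbove
        = ((1 : Matrix (Fin (n+1)) (Fin (n+1)) ℝ).submatrix j0.succAbove (Equiv.refl _))
          * (A * ((1 : Matrix (Fin (n+1)) (Fin (n+1)) ℝ).submatrix (Equiv.refl _) i0.succAbove)) := by
      rw [mul_submatrix_one, one_submatrix_mul]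
      rfl
    calc n = (A.submatrix j0.succAbove i0.succAbove).rank := h1.symm
      _ ≤ (A * ((1 : Matrix (Fin (n+1)) (Fin (n+1)) ℝ).submatrix (Equiv.refl _) i0.succAbove)).rank := by
          rw [h2]; exact Matrix.rank_mul_le_right _ _
      _ ≤ A.rank := Matrix.rank_mul_le_left _ _
  have hker : ∃ v, v ≠ 0 ∧ A *ᵥ v = 0 := by
    obtain ⟨v, hv1, hv2⟩ := (Matrix.exists_mulVec_eq_zero_iff).2 hd
    exact ⟨v, hv1, hv2⟩
  have hrn := LinearMap.finrank_range_add_finrank_ker A.mulVecLin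
  have hpi : Module.finrank ℝ (Fin (n+1) → ℝ) = n + 1 := by
    simp [Module.finrank_pi]
  have hkerpos : 0 < Module.finrank ℝ (LinearMap.ker A.mulVecLin) := by
    obtain ⟨v, hv1, hv2⟩ := hker
    have hmem : v ∈ LinearMap.ker A.mulVecLin := by
      simp [LinearMap.mem_ker, Matrix.mulVecLin_apply, hv2]
    have : Nontrivial (LinearMap.ker A.mulVecLin) :=
      nontrivial_of_ne ⟨v, hmem⟩ 0 (by simp [Subtype.ext_iff, hv1])
    exact Module.finrank_pos
  have hrank_le : A.rank ≤ n := by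
    have : A.rank + Module.finrank ℝ (LinearMap.ker A.mulVecLin) = n + 1 := by
      rw [Matrix.rank]; rw [hpi] at hrn; exact hrn
    omega
  have hrank : A.rank = n := le_antisymm hrank_le hrank_ge
  have hkerone : Module.finrank ℝ (LinearMap.ker A.mulVecLin) = 1 := by
    rw [Matrix.rank] at hrank
    rw [hpi, hrank] at hrn
    omega
  have hNmem : N ∈ LinearMap.ker A.mulVecLin := by
    rw [LinearMap.mem_ker, Matrix.mulVecLin_apply, hNdef, mulVec_mulVec, hAB, zero_mulVec]
  have hNne : N ≠ 0 := by
    intro h; apply hu0; rw [hudef, h]; simp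
  have hspan : (ℝ ∙ N) = LinearMap.ker A.mulVecLin := by
    apply Submodule.eq_of_le_of_finrank_le
      ((Submodule.span_singleton_le_iff_mem _ _).2 hNmem)
    rw [hkerone, finrank_span_singleton hNne]
  have hcol : ∀ j, ∃ c : ℝ, B *ᵥ Pi.single j 1 = c • N := by
    intro j
    have hmem : B *ᵥ Pi.single j 1 ∈ LinearMap.ker A.mulVecLin := by
      rw [LinearMap.mem_ker, Matrix.mulVecLin_apply, mulVec_mulVec, hAB, zero_mulVec]
    rw [← hspan, Submodule.mem_span_singleton] at hmem
    obtain ⟨c, hc⟩ := hmem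
    exact ⟨c, hc.symm⟩
  choose c hc using hcol
  have hBij : ∀ i j, B i j = c j * N i := by
    intro i j
    have := congrFun (hc j) i
    simpa using this
  have hcu : ∀ j, N j = c j * u := by
    intro j
    have h0 : N j = ∑ i, B j i * f i := rfl
    rw [h0]
    have h1 : ∀ i, B j i * f i = c j * (N i * f i) := by
      intro i; rw [hBs j i, hBij i j]; ring
    rw [Finset.sum_congr rfl fun i _ => h1 i, ← Finset.mul_sum]
    congr 1
    rw [hudef, dotProduct_comm]
    rfl
  constructor
  · ext i j
    have h1 : (u • B) i j = u * (c j * N i) := by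
      simp [hBij i j]
    rw [h1, vecMulVec_apply]
    rw [hcu j]; ring
  · exact hrank

end helpers

/-- with `A` symmetric, `u = fᵀ (adj A) f ≠ 0`, `N = (adj A) f`, and
`σ = M_q⁻¹ − q⁻¹ u⁻¹ N Nᵀ` where `M_q = A − u⁻¹(det A) f fᵀ + q u⁻¹ f fᵀ`, one has
`adj A − u⁻¹ N Nᵀ = (det A)·σ`; in particular if `det A = 0` then
`adj A = u⁻¹ N Nᵀ` and `rank A = n`. -/
theorem stmt4 (n : ℕ) (hn : 1 ≤ n)
    (A : Matrix (Fin (n+1)) (Fin (n+1)) ℝ) (hA : A.IsSymm)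
    (f : Fin (n+1) → ℝ)
    (u : ℝ) (hu : u = f ⬝ᵥ (A.adjugate *ᵥ f)) (hu0 : u ≠ 0)
    (N : Fin (n+1) → ℝ) (hN : N = A.adjugate *ᵥ f)
    (M : ℝ → Matrix (Fin (n+1)) (Fin (n+1)) ℝ)
    (hM : ∀ q : ℝ, M q = A - (u⁻¹ * A.det) • vecMulVec f f + (q * u⁻¹) • vecMulVec f f) :
    (∀ q : ℝ, q ≠ 0 →
      A.adjugate - u⁻¹ • vecMulVec N N
        = A.det • ((M q)⁻¹ - (q⁻¹ * u⁻¹) • vecMulVec N N)) ∧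
    (A.det = 0 → A.adjugate = u⁻¹ • vecMulVec N N ∧ A.rank = n) := by
  subst hu hN
  set B := A.adjugate with hBdef
  set N := B *ᵥ f with hNdef
  set u := f ⬝ᵥ N with hudef
  have hkey : A.det = 0 → (B = u⁻¹ • vecMulVec N N ∧ A.rank = n) := by
    intro hd
    obtain ⟨h1, h2⟩ := key_rank1 n A hA hd f hu0
    refine ⟨?_, h2⟩
    rw [← h1, smul_smul, inv_mul_cancel₀ hu0, one_smul]
  refine ⟨?_, hkey⟩
  intro q hq
  by_cases hd : A.det = 0
  · rw [hd, zero_smul, (hkey hd).1, sub_self]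
  · -- invertible case
    have hBsT : Bᵀ = B := by rw [hBdef, adjugate_transpose, hA.eq]
    have hfvB : f ᵥ* B = N := by rw [← hBsT, vecMul_transpose]
    have hAB : A * B = A.det • 1 := mul_adjugate A
    have hFB : vecMulVec f f * B = vecMulVec f N := by
      rw [vecMulVec_mul_mat, hfvB]
    have hAV : A * vecMulVec N N = A.det • vecMulVec f N := by
      rw [mat_mul_vecMulVec]
      have : A *ᵥ N = A.det • f := by
        rw [hNdef, mulVec_mulVec, hAB, smul_mulVec, one_mulVec]
      rw [this, vecMulVec_smul_left]
    have hFV : vecMulVec f f * vecMulVec N N = u • vecMulVec f N := by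
      rw [vecMulVec_mul_mat, _root_.vecMul_vecMulVec, ← hudef]
      ext i j
      simp [vecMulVec_apply]
      ring
    set X : Matrix (Fin (n+1)) (Fin (n+1)) ℝ :=
      (A.det)⁻¹ • (B - u⁻¹ • vecMulVec N N) + (q⁻¹ * u⁻¹) • vecMulVec N N with hXdef
    have hMB : M q * B = A.det • 1 + (q * u⁻¹ - u⁻¹ * A.det) • vecMulVec f N := by
      rw [hM q, Matrix.add_mul, Matrix.sub_mul, Matrix.smul_mul, Matrix.smul_mul, hAB, hFB]
      module
    have hMV : M q * vecMulVec N N = q • vecMulVec f N := by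
      rw [hM q, Matrix.add_mul, Matrix.sub_mul, Matrix.smul_mul, Matrix.smul_mul, hAV, hFV]
      match_scalars
      field_simp
      ring
    have hMX : M q * X = 1 := by
      rw [hXdef, Matrix.mul_add, Matrix.mul_smul, Matrix.mul_smul, Matrix.mul_sub,
        Matrix.mul_smul, hMB, hMV]
      match_scalars <;> (field_simp; try ring)
    have hinv : (M q)⁻¹ = X := inv_eq_right_inv hMX
    rw [hinv, hXdef]
    match_scalars <;> (field_simp; try ring)
end

section
/- Let n ≥ 1, let F be a C^∞ function on an open set Ω ⊆ ℝ^{n+1}, and let p ∈ Ω with U(F)(p) ≠ 0. Define the symmetric matrix h := −U(F)(p)⁻¹·( Hess F(p) − H(F)(p)·U(F)(p)⁻¹·∇F(p)∇F(p)ᵀ ) (the representative, with respect to the transversal N(F), of the second fundamental form of the level set of F through p). Then for any vectors v₁, …, vₙ ∈ ker dF(p) = { v : ⟨∇F(p), v⟩ = 0 }: |U(F)(p)|^{n+1} · | det( (vᵢᵀ h vⱼ)_{1≤i,j≤n} ) | = ( det[ N(F)(p), v₁, …, vₙ ] )², where det[N, v₁, …, vₙ] denotes the determinant of the (n+1)×(n+1)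 matrix with these columns. (Equivalently, along a level set, |U(F)|^{(n+1)/2} times the volume density of h equals the volume density induced by interior multiplication of N into the standard volume form.) -/
open Matrix

/-- Auxiliary algebraic identity in the invertible case. -/
lemma aux_inv {n : ℕ} (A : Matrix (Fin (n+1)) (Fin (n+1)) ℝ) (hA : Aᵀ = A)
    (hd : A.det ≠ 0) (g : Fin (n+1) → ℝ) (v : Fin n → (Fin (n+1) → ℝ))
    (hv : ∀ i, g ⬝ᵥ v i = 0) :
    (Matrix.of fun i j => (Fin.cons (A.adjugate *ᵥ g) v : Fin (n+1) → (Fin (n+1) → ℝ)) j i).det ^ 2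
      = (g ⬝ᵥ (A.adjugate *ᵥ g)) * (Matrix.of fun i j : Fin n => v i ⬝ᵥ (A *ᵥ v j)).det := by
  set N : Fin (n+1) → ℝ := A.adjugate *ᵥ g with hN
  set c : Fin (n+1) → (Fin (n+1) → ℝ) := Fin.cons N v with hc
  set M : Matrix (Fin (n+1)) (Fin (n+1)) ℝ := Matrix.of fun i j => c j i with hM
  set B : Matrix (Fin n) (Fin n) ℝ := Matrix.of fun i j : Fin n => v i ⬝ᵥ (A *ᵥ v j) with hB
  have hAN : A *ᵥ N = A.det • g := by
    rw [hN, mulVec_mulVec, Matrix.mul_adjugate, smul_mulVec, one_mulVec]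
  have hNA : N ᵥ* A = A.det • g := by
    rw [← hA, vecMul_transpose, hA, hAN]
  -- the conjugated matrix
  have entry : ∀ i j, (Mᵀ * (A * M)) i j = c i ⬝ᵥ (A *ᵥ c j) := by
    intro i j
    rw [Matrix.mul_apply]
    simp only [Matrix.transpose_apply, hM, Matrix.of_apply, Matrix.mul_apply,
      dotProduct, Matrix.mulVec, dotProduct]
  set C : Matrix (Fin (n+1)) (Fin (n+1)) ℝ :=
    Matrix.of (Fin.cons (Fin.cons (A.det * (g ⬝ᵥ N)) (0 : Fin n → ℝ))
      (fun j => Fin.cons 0 (fun k => B j k))) with hC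
  have hMAM : Mᵀ * (A * M) = C := by
    ext i j
    rw [entry]
    refine Fin.cases ?_ (fun i' => ?_) i <;> refine Fin.cases ?_ (fun j' => ?_) j
    · simp only [hc, Fin.cons_zero, hAN, dotProduct_smul, smul_eq_mul, hC, Matrix.of_apply]
      rw [dotProduct_comm]
    · simp only [hc, Fin.cons_zero, Fin.cons_succ, hC, Matrix.of_apply, Pi.zero_apply]
      rw [dotProduct_mulVec, hNA, smul_dotProduct, smul_eq_mul, hv, mul_zero]
    · simp only [hc, Fin.cons_zero, Fin.cons_succ, hAN, dotProduct_smul, smul_eq_mul, hC,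
        Matrix.of_apply, Pi.zero_apply]
      rw [dotProduct_comm, hv, mul_zero]
    · simp [hc, hC, hB]
  have hdetC : C.det = A.det * (g ⬝ᵥ N) * B.det := by
    have h0 : ∀ i' : Fin n, C i'.succ 0 = 0 := by
      intro i'; simp [hC]
    have hsub : C.submatrix (Fin.succAbove 0) Fin.succ = B := by
      ext i j
      simp [hC, Matrix.submatrix_apply, Fin.succAbove_zero]
    rw [Matrix.det_succ_column_zero, Fin.sum_univ_succ, hsub]
    simp [h0, hC]
  have hdet : A.det * M.det ^ 2 = A.det * ((g ⬝ᵥ N) * B.det) := by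
    have := congrArg Matrix.det hMAM
    rw [Matrix.det_mul, Matrix.det_mul, Matrix.det_transpose, hdetC] at this
    ring_nf at this ⊢
    linarith [this]
  exact mul_left_cancel₀ hd hdet

/-- Auxiliary algebraic identity, general symmetric case, by perturbation. -/
lemma aux_gen {n : ℕ} (A : Matrix (Fin (n+1)) (Fin (n+1)) ℝ) (hA : Aᵀ = A)
    (g : Fin (n+1) → ℝ) (v : Fin n → (Fin (n+1) → ℝ))
    (hv : ∀ i, g ⬝ᵥ v i = 0) :
    (Matrix.of fun i j => (Fin.cons (A.adjugate *ᵥ g) v : Fin (n+1) → (Fin (n+1) → ℝ)) j i).det ^ 2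
      = (g ⬝ᵥ (A.adjugate *ᵥ g)) * (Matrix.of fun i j : Fin n => v i ⬝ᵥ (A *ᵥ v j)).det := by
  set P : ℝ → Matrix (Fin (n+1)) (Fin (n+1)) ℝ := fun t => A + t • 1 with hP
  have hPc : Continuous P := by
    exact continuous_const.add (continuous_id.smul continuous_const)
  have hPsym : ∀ t, (P t)ᵀ = P t := by
    intro t
    simp [hP, Matrix.transpose_add, Matrix.transpose_smul, hA]
  -- the two sides as functions of t
  set f₁ : ℝ → ℝ := fun t =>
    (Matrix.of fun i j => (Fin.cons ((P t).adjugate *ᵥ g) v : Fin (n+1) → (Fin (n+1) → ℝ)) j i).det ^ 2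
    with hf₁
  set f₂ : ℝ → ℝ := fun t =>
    (g ⬝ᵥ ((P t).adjugate *ᵥ g)) * (Matrix.of fun i j : Fin n => v i ⬝ᵥ ((P t) *ᵥ v j)).det
    with hf₂
  have hNc : Continuous fun t => (P t).adjugate *ᵥ g :=
    hPc.matrix_adjugate.matrix_mulVec continuous_const
  have hc₁ : Continuous f₁ := by
    apply Continuous.pow
    apply Continuous.matrix_det
    apply continuous_matrix
    intro i j
    refine Fin.cases ?_ (fun j' => ?_) j
    · simp only [Fin.cons_zero, Matrix.of_apply]
      exact (continuous_apply i).comp hNc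
    · simp only [Fin.cons_succ, Matrix.of_apply]
      exact continuous_const
  have hc₂ : Continuous f₂ := by
    apply Continuous.mul
    · exact continuous_const.dotProduct hNc
    · apply Continuous.matrix_det
      apply continuous_matrix
      intro i j
      exact continuous_const.dotProduct (hPc.matrix_mulVec continuous_const)
  -- dense set where P t is invertible
  have hevalc : ∀ t : ℝ, (P t).det = ((-A).charpoly).eval t := by
    intro t
    rw [Matrix.charpoly, ← Polynomial.coe_evalRingHom, RingHom.map_det]
    congr 1
    ext i j
    by_cases hij : i = j <;>
      simp [hij, Matrix.charmatrix_apply, Matrix.map_apply, hP, Matrix.one_apply,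
        Matrix.diagonal_apply, add_comm, sub_eq_add_neg]
  have hq : ((-A).charpoly) ≠ 0 := (Matrix.charpoly_monic (-A)).ne_zero
  have hdense : Dense {t : ℝ | (P t).det ≠ 0} := by
    have hfin : ({t : ℝ | ((-A).charpoly).IsRoot t}).Finite :=
      Polynomial.finite_setOf_isRoot hq
    have : ({t : ℝ | ((-A).charpoly).IsRoot t})ᶜ ⊆ {t : ℝ | (P t).det ≠ 0} := by
      intro t ht
      simp only [Set.mem_compl_iff, Set.mem_setOf_eq, Polynomial.IsRoot] at ht ⊢
      rw [hevalc]
      exact ht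
    exact Dense.mono this (hfin.countable.dense_compl ℝ)
  have heq : f₁ = f₂ := by
    apply hc₁.ext_on hdense hc₂
    intro t ht
    exact aux_inv (P t) (hPsym t) ht g v hv
  have := congrFun heq 0
  simpa [hf₁, hf₂, hP] using this

theorem stmt5 (n : ℕ) (hn : 1 ≤ n)
    (Ω : Set (Fin (n+1) → ℝ)) (hΩ : IsOpen Ω)
    (F : (Fin (n+1) → ℝ) → ℝ) (hF : ContDiffOn ℝ (⊤ : ℕ∞) F Ω)
    (p : Fin (n+1) → ℝ) (hp : p ∈ Ω) (hU : Uval F p ≠ 0)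
    (h : Matrix (Fin (n+1)) (Fin (n+1)) ℝ)
    (hh : h = (-(Uval F p)⁻¹) • (hessM F p
      - (Hdet F p * (Uval F p)⁻¹) • vecMulVec (gradv F p) (gradv F p)))
    (v : Fin n → (Fin (n+1) → ℝ)) (hv : ∀ i, gradv F p ⬝ᵥ v i = 0) :
    |Uval F p| ^ (n+1) * |(Matrix.of fun i j => v i ⬝ᵥ (h *ᵥ v j)).det|
      = (Matrix.of fun i j => (Fin.cons (Nvec F p) v : Fin (n+1) → (Fin (n+1) → ℝ)) j i).det ^ 2 := by
  -- symmetry of the Hessian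
  have hFp : ContDiffAt ℝ (⊤ : ℕ∞) F p := hF.contDiffAt (hΩ.mem_nhds hp)
  have hsym : IsSymmSndFDerivAt ℝ F p :=
    hFp.isSymmSndFDerivAt (by rw [minSmoothness_of_isRCLikeNormedField]; exact WithTop.coe_le_coe.mpr (le_top : (2 : ℕ∞) ≤ ⊤))
  have hdiff : DifferentiableAt ℝ (fderiv ℝ F) p := by
    have : ContDiffAt ℝ 1 (fderiv ℝ F) p :=
      hFp.fderiv_right (m := 1) (by norm_cast)
    exact this.differentiableAt one_ne_zero
  have hpd : ∀ i j : Fin (n+1), pd1 (pd1 F j) i p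
      = fderiv ℝ (fderiv ℝ F) p (Pi.single i 1) (Pi.single j 1) := by
    intro i j
    have : pd1 (pd1 F j) i p
        = fderiv ℝ (fun x => (fderiv ℝ F x) (Pi.single j 1)) p (Pi.single i 1) := rfl
    rw [this, fderiv_clm_apply hdiff (differentiableAt_const _)]
    simp
  have hAsym : (hessM F p)ᵀ = hessM F p := by
    ext i j
    simp only [Matrix.transpose_apply, hessM, Matrix.of_apply, hpd]
    exact (hsym _ _).symm
  set A := hessM F p with hA
  set g := gradv F p with hg
  set U := Uval F p with hUdef
  have hkey := aux_gen A hAsym g v hv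
  set M : Matrix (Fin (n+1)) (Fin (n+1)) ℝ :=
    Matrix.of fun i j => (Fin.cons (Nvec F p) v : Fin (n+1) → (Fin (n+1) → ℝ)) j i with hM
  set B : Matrix (Fin n) (Fin n) ℝ := Matrix.of fun i j : Fin n => v i ⬝ᵥ (A *ᵥ v j) with hB
  have hNvec : Nvec F p = A.adjugate *ᵥ g := rfl
  have hUval : U = g ⬝ᵥ (A.adjugate *ᵥ g) := rfl
  have hkey' : M.det ^ 2 = U * B.det := by
    rw [hM, hNvec, hUval, hB]
    exact hkey
  -- the h-matrix on tangent vectors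
  have hBh : (Matrix.of fun i j => v i ⬝ᵥ (h *ᵥ v j)) = (-U⁻¹) • B := by
    ext i j
    have hGv : vecMulVec g g *ᵥ v j = 0 := by
      ext k
      simp only [Matrix.mulVec, dotProduct, vecMulVec_apply, Pi.zero_apply, mul_assoc]
      rw [← Finset.mul_sum]
      have h2 : ∑ l, g l * v j l = g ⬝ᵥ v j := rfl
      rw [h2, hv, mul_zero]
    rw [hh]
    simp only [Matrix.smul_apply, Matrix.of_apply, smul_eq_mul, hB,
      smul_mulVec, sub_mulVec, smul_mulVec, hGv, smul_zero, sub_zero,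
      dotProduct_smul]
  rw [hBh]
  rw [Matrix.det_smul]
  rw [abs_mul, abs_pow, abs_neg, abs_inv]
  have hUabs : |U| ≠ 0 := abs_ne_zero.mpr hU
  have hcard : Fintype.card (Fin n) = n := Fintype.card_fin n
  rw [hcard]
  have : |U| ^ (n+1) * (|U|⁻¹ ^ n * |B.det|) = |U| * |B.det| := by
    rw [pow_succ]
    rw [inv_pow, mul_comm (|U| ^ n) |U|, mul_assoc, ← mul_assoc (|U| ^ n),
      mul_inv_cancel₀ (pow_ne_zero _ hUabs), one_mul]
  rw [this, ← abs_mul, ← hkey']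
  exact abs_of_nonneg (sq_nonneg _)
end

section
/- Let n ≥ 1, let F be a C^∞ function on an open set Ω ⊆ ℝ^{n+1}, let I ⊆ ℝ be an open interval containing F(Ω), and let ψ : I → ℝ be a C^∞ function with nowhere-vanishing derivative ψ′. Then for every x ∈ Ω: U(ψ∘F)(x) = ψ′(F(x))^{n+2} · U(F)(x). In particular, if U(F) is nowhere zero on Ω then U(ψ∘F) is nowhere zero on Ω. -/
open Matrix

lemma aux_det_col {ι : Type*} [Fintype ι] [DecidableEq ι]
    (A : Matrix ι ι ℝ) (g : ι → ℝ) (t : ℝ) (i : ι) :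
    ((A + t • vecMulVec g g).updateCol i g).det = (A.updateCol i g).det := by
  classical
  set N : Finset ι → Matrix ι ι ℝ := fun s =>
    Matrix.of fun k j => if j = i then g k else A k j + (if j ∈ s then t * g j * g k else 0)
    with hN
  have key : ∀ s : Finset ι, (N s).det = (N ∅).det := by
    intro s
    induction s using Finset.induction_on with
    | empty => rfl
    | @insert a s ha ih =>
      by_cases hai : a = i
      · have he : N (insert a s) = N s := by
          ext k j
          by_cases hji : j = i <;>
            simp [hN, hji, Finset.mem_insert, hai]
        rw [he, ih]
      · have heq : N (insert a s) = (N s).updateCol a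
            (fun k => N s k a + (t * g a) • N s k i) := by
          ext k j
          have hia : ¬ i = a := fun h => hai h.symm
          by_cases hja : j = a
          · subst hja
            simp [hN, Matrix.updateCol_apply, hai, ha, smul_eq_mul]
          · by_cases hji : j = i <;>
              simp [hN, Matrix.updateCol_apply, hji, hja, hai, hia, Finset.mem_insert]
        rw [heq, Matrix.det_updateCol_add_smul_self _ hai, ih]
  have h1 : (A + t • vecMulVec g g).updateCol i g = N Finset.univ := by
    ext k j
    by_cases hji : j = i <;>
      simp [hN, hji, Matrix.updateCol_apply, vecMulVec, mul_comm, mul_left_comm]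
  have h2 : A.updateCol i g = N ∅ := by
    ext k j
    by_cases hji : j = i <;> simp [hN, hji, Matrix.updateCol_apply]
  rw [h1, h2, key]

lemma aux_adj {ι : Type*} [Fintype ι] [DecidableEq ι]
    (A : Matrix ι ι ℝ) (g : ι → ℝ) (t : ℝ) :
    g ⬝ᵥ ((A + t • vecMulVec g g).adjugate *ᵥ g) = g ⬝ᵥ (A.adjugate *ᵥ g) := by
  rw [← Matrix.cramer_eq_adjugate_mulVec, ← Matrix.cramer_eq_adjugate_mulVec]
  unfold dotProduct
  refine Finset.sum_congr rfl fun i _ => ?_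
  rw [Matrix.cramer_apply, Matrix.cramer_apply, aux_det_col]

/-- behaviour of `U(F)` under external reparameterization:
`U(ψ∘F) = (ψ'∘F)^{n+2} · U(F)`; in particular nonvanishing of `U(F)` is preserved. -/
theorem stmt6 (n : ℕ) (hn : 1 ≤ n)
    (Ω : Set (Fin (n+1) → ℝ)) (hΩ : IsOpen Ω)
    (F : (Fin (n+1) → ℝ) → ℝ) (hF : ContDiffOn ℝ (⊤ : ℕ∞) F Ω)
    (I : Set ℝ) (hIopen : IsOpen I) (hIconn : I.OrdConnected) (hFI : F '' Ω ⊆ I)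
    (ψ : ℝ → ℝ) (hψ : ContDiffOn ℝ (⊤ : ℕ∞) ψ I)
    (hψ' : ∀ t ∈ I, deriv ψ t ≠ 0) :
    (∀ x ∈ Ω, Uval (ψ ∘ F) x = (deriv ψ (F x)) ^ (n+2) * Uval F x) ∧
    ((∀ x ∈ Ω, Uval F x ≠ 0) → ∀ x ∈ Ω, Uval (ψ ∘ F) x ≠ 0) := by
  have htop : ((⊤ : ℕ∞) : WithTop ℕ∞) + 1 ≤ ((⊤ : ℕ∞) : WithTop ℕ∞) := by
    exact_mod_cast (le_top : ((⊤ : ℕ∞) + 1 : ℕ∞) ≤ ⊤)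
  have hmem : ∀ x ∈ Ω, F x ∈ I := fun x hx => hFI ⟨x, hx, rfl⟩
  have hFdiff : ∀ x ∈ Ω, DifferentiableAt ℝ F x := fun x hx =>
    (hF.differentiableOn (by simp)).differentiableAt (hΩ.mem_nhds hx)
  have hψdiff : ∀ t ∈ I, DifferentiableAt ℝ ψ t := fun t ht =>
    (hψ.differentiableOn (by simp)).differentiableAt (hIopen.mem_nhds ht)
  have hψ1 : ContDiffOn ℝ (⊤ : ℕ∞) (deriv ψ) I := hψ.deriv_of_isOpen hIopen htop
  have hψ2 : ∀ t ∈ I, DifferentiableAt ℝ (deriv ψ) t := fun t ht =>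
    (hψ1.differentiableOn (by simp)).differentiableAt (hIopen.mem_nhds ht)
  have hpdF : ∀ j, ContDiffOn ℝ (⊤ : ℕ∞) (pd1 F j) Ω := by
    intro j
    have h1 : ContDiffOn ℝ (⊤ : ℕ∞) (fderiv ℝ F) Ω := hF.fderiv_of_isOpen hΩ htop
    exact h1.clm_apply contDiffOn_const
  have hpdFdiff : ∀ j, ∀ x ∈ Ω, DifferentiableAt ℝ (pd1 F j) x := fun j x hx =>
    ((hpdF j).differentiableOn (by simp)).differentiableAt (hΩ.mem_nhds hx)
  have key1 : ∀ x ∈ Ω, ∀ i, pd1 (ψ ∘ F) i x = deriv ψ (F x) * pd1 F i x := by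
    intro x hx i
    have hc : HasFDerivAt (ψ ∘ F) (deriv ψ (F x) • fderiv ℝ F x) x :=
      ((hψdiff _ (hmem x hx)).hasDerivAt).comp_hasFDerivAt x (hFdiff x hx).hasFDerivAt
    simp [pd1, hc.fderiv, smul_eq_mul]
  have key2 : ∀ x ∈ Ω, ∀ i j, pd1 (pd1 (ψ ∘ F) j) i x
      = deriv ψ (F x) * pd1 (pd1 F j) i x
        + deriv (deriv ψ) (F x) * (pd1 F i x * pd1 F j x) := by
    intro x hx i j
    have hev : pd1 (ψ ∘ F) j =ᶠ[nhds x] fun y => deriv ψ (F y) * pd1 F j y := by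
      filter_upwards [hΩ.mem_nhds hx] with y hy
      exact key1 y hy j
    have hc : HasFDerivAt (fun y => deriv ψ (F y))
        (deriv (deriv ψ) (F x) • fderiv ℝ F x) x :=
      ((hψ2 _ (hmem x hx)).hasDerivAt).comp_hasFDerivAt x (hFdiff x hx).hasFDerivAt
    have hd : HasFDerivAt (pd1 F j) (fderiv ℝ (pd1 F j) x) x := (hpdFdiff j x hx).hasFDerivAt
    have hmul : HasFDerivAt (fun y => deriv ψ (F y) * pd1 F j y) _ x := hc.mul hd
    have h1 : fderiv ℝ (pd1 (ψ ∘ F) j) x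
        = fderiv ℝ (fun y => deriv ψ (F y) * pd1 F j y) x := hev.fderiv_eq
    have h2 := hmul.fderiv
    have h3 : pd1 (pd1 (ψ ∘ F) j) i x
        = fderiv ℝ (pd1 (ψ ∘ F) j) x (Pi.single i 1) := rfl
    rw [h3, h1, h2]
    simp [pd1, smul_eq_mul]
    ring
  have hgrad : ∀ x ∈ Ω, gradv (ψ ∘ F) x = deriv ψ (F x) • gradv F x := by
    intro x hx
    funext i
    simp [gradv, key1 x hx i, smul_eq_mul]
  have hhess : ∀ x ∈ Ω, hessM (ψ ∘ F) x
      = deriv ψ (F x) • hessM F x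
        + deriv (deriv ψ) (F x) • vecMulVec (gradv F x) (gradv F x) := by
    intro x hx
    ext i j
    simp [hessM, vecMulVec, gradv, key2 x hx i j, smul_eq_mul]
  have main : ∀ x ∈ Ω, Uval (ψ ∘ F) x = (deriv ψ (F x)) ^ (n+2) * Uval F x := by
    intro x hx
    have e0 : Uval (ψ ∘ F) x
        = gradv (ψ ∘ F) x ⬝ᵥ ((hessM (ψ ∘ F) x).adjugate *ᵥ gradv (ψ ∘ F) x) := rfl
    rw [e0, hgrad x hx, hhess x hx]
    set c := deriv ψ (F x) with hc
    set dd := deriv (deriv ψ) (F x) with hdd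
    set g := gradv F x with hg
    set H := hessM F x with hH
    rw [Matrix.mulVec_smul, dotProduct_smul, smul_dotProduct]
    rw [aux_adj (c • H) g dd, Matrix.adjugate_smul,
      show Fintype.card (Fin (n+1)) - 1 = n by simp,
      Matrix.smul_mulVec, dotProduct_smul]
    have : Uval F x = g ⬝ᵥ (H.adjugate *ᵥ g) := rfl
    rw [this]
    simp only [smul_eq_mul]
    ring
  refine ⟨main, fun hU x hx => ?_⟩
  rw [main x hx]
  exact mul_ne_zero (pow_ne_zero _ (hψ' _ (hmem x hx))) (hU x hx)
end

section
/- (Reilly) Let n ≥ 1, let F be a C^∞ function on an open set of ℝ^{n+1}, let Ω be a connected open set on which U(F) is nowhere zero, and let r ∈ F(Ω). Define G := |U(F)|^{−1/(n+2)}·(F − r) on Ω. Then at every point of the level set { x ∈ Ω : F(x) = r } one has U(G) = sign(U(F)); in particular |U(G)| = 1 along this level set. -/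
open Matrix

section AlgebraAux

open Polynomial

variable {ι : Type*} [Fintype ι] [DecidableEq ι]

noncomputable def bmat (H : Matrix ι ι ℝ) (g : ι → ℝ) : Matrix (Unit ⊕ ι) (Unit ⊕ ι) ℝ :=
  fromBlocks 0 (replicateRow Unit g) (replicateCol Unit g) H

lemma rowcol_entry (M : Matrix ι ι ℝ) (g : ι → ℝ) (i j : Unit) :
    (replicateRow Unit g * M * replicateCol Unit g) i j = g ⬝ᵥ M *ᵥ g := by
  simp [Matrix.mul_apply, dotProduct, mulVec, Finset.sum_mul, Finset.mul_sum, mul_assoc]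
  exact Finset.sum_comm

lemma bmat_det_of_isUnit (H : Matrix ι ι ℝ) (g : ι → ℝ) (h : IsUnit H.det) :
    (bmat H g).det = -(g ⬝ᵥ H.adjugate *ᵥ g) := by
  letI := H.invertibleOfIsUnitDet h
  rw [bmat, det_fromBlocks₂₂, det_unique (0 - replicateRow Unit g * ⅟H * replicateCol Unit g)]
  rw [invOf_eq_nonsing_inv, Matrix.inv_def]
  have : (replicateRow Unit g * (Ring.inverse H.det • H.adjugate) * replicateCol Unit g) default default
      = Ring.inverse H.det * (g ⬝ᵥ H.adjugate *ᵥ g) := by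
    rw [Matrix.mul_smul, Matrix.smul_mul, Matrix.smul_apply, rowcol_entry]
    simp
  rw [Matrix.sub_apply, this, Matrix.zero_apply, zero_sub, mul_neg, ← mul_assoc,
    mul_comm H.det, Ring.inverse_mul_cancel _ h, one_mul]

lemma map_dot (f : ℝ[X] →+* ℝ) (v w : ι → ℝ[X]) (M : Matrix ι ι ℝ[X]) :
    f (v ⬝ᵥ M *ᵥ w) = (fun i => f (v i)) ⬝ᵥ (M.map f) *ᵥ (fun i => f (w i)) := by
  simp [dotProduct, mulVec, map_sum, _root_.map_mul, Matrix.map_apply]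

lemma bmat_det (H : Matrix ι ι ℝ) (g : ι → ℝ) :
    (bmat H g).det = -(g ⬝ᵥ H.adjugate *ᵥ g) := by
  classical
  set Hp : Matrix ι ι ℝ[X] := H.map C + (X : ℝ[X]) • 1 with hHp
  set gp : ι → ℝ[X] := fun i => C (g i) with hgp
  set Bp : Matrix (Unit ⊕ ι) (Unit ⊕ ι) ℝ[X] :=
    fromBlocks 0 (replicateRow Unit gp) (replicateCol Unit gp) Hp with hBp
  set q : ℝ[X] := Bp.det + gp ⬝ᵥ Hp.adjugate *ᵥ gp with hq
  have hmapH : ∀ t : ℝ, Hp.map (evalRingHom t) = H + t • 1 := by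
    intro t
    ext i j
    by_cases hij : i = j <;>
      simp [hHp, Matrix.map_apply, Matrix.one_apply, Matrix.add_apply, Matrix.smul_apply, hij]
  have hmapg : ∀ t : ℝ, (fun i => (evalRingHom t) (gp i)) = g := by
    intro t; funext i; simp [hgp]
  have hmapB : ∀ t : ℝ, Bp.map (evalRingHom t) = bmat (H + t • 1) g := by
    intro t
    rw [hBp, fromBlocks_map, bmat, hmapH t]
    ext i j
    cases i <;> cases j <;> simp [fromBlocks, row, col, Matrix.map_apply, hgp]
  have hdetHp : Hp.det = Matrix.charpoly (-H) := by
    rw [Matrix.charpoly]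
    congr 1
    ext i j
    by_cases hij : i = j <;>
      simp [hHp, charmatrix_apply, Matrix.add_apply, Matrix.smul_apply, Matrix.map_apply,
        Matrix.one_apply, Matrix.diagonal_apply, hij, add_comm]
  have heval : ∀ t : ℝ, eval t q
      = (bmat (H + t • 1) g).det + g ⬝ᵥ (H + t • 1).adjugate *ᵥ g := by
    intro t
    rw [hq]
    rw [eval_add]
    congr 1
    · have := RingHom.map_det (evalRingHom t) Bp
      rw [RingHom.mapMatrix_apply, hmapB t] at this
      exact this
    · have hadj := RingHom.map_adjugate (evalRingHom t) Hp
      rw [RingHom.mapMatrix_apply, RingHom.mapMatrix_apply, hmapH t] at hadj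
      rw [show (eval t (gp ⬝ᵥ Hp.adjugate *ᵥ gp)) = (evalRingHom t) (gp ⬝ᵥ Hp.adjugate *ᵥ gp) from rfl,
        map_dot, ← hadj, hmapg t]
  have hqzero : q = 0 := by
    apply Polynomial.eq_zero_of_infinite_isRoot
    apply Set.Infinite.mono (s := {t : ℝ | ¬ (Matrix.charpoly (-H)).IsRoot t})
    · intro t ht
      have hunit : IsUnit (H + t • 1).det := by
        rw [isUnit_iff_ne_zero]
        intro h0
        apply ht
        have : eval t Hp.det = (H + t • 1).det := by
          have hd := RingHom.map_det (evalRingHom t) Hp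
          rw [RingHom.mapMatrix_apply, hmapH t] at hd
          exact hd
        rw [Polynomial.IsRoot, ← hdetHp, this, h0]
      simp only [Set.mem_setOf_eq, Polynomial.IsRoot]
      rw [heval t, bmat_det_of_isUnit _ _ hunit]
      ring
    · apply Set.Finite.infinite_compl
      exact Polynomial.finite_setOf_isRoot (Matrix.charpoly_monic (-H)).ne_zero
  have := heval 0
  rw [hqzero, eval_zero] at this
  have h1 : H + (0:ℝ) • 1 = H := by simp
  rw [h1] at this
  linarith [this]

lemma bmat_conj (H : Matrix ι ι ℝ) (g a : ι → ℝ) :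
    bmat (H + replicateCol Unit g * replicateRow Unit a + replicateCol Unit a * replicateRow Unit g) g =
      (fromBlocks 1 0 (replicateCol Unit a) 1) * bmat H g * (fromBlocks 1 0 (replicateCol Unit a) 1)ᵀ := by
  rw [fromBlocks_transpose, transpose_one, transpose_zero, transpose_replicateCol, bmat, bmat,
    fromBlocks_multiply, fromBlocks_multiply]
  congr 1 <;> simp [Matrix.mul_assoc] <;> abel

lemma adj_quad_invariant (H : Matrix ι ι ℝ) (g a : ι → ℝ) :
    g ⬝ᵥ (H + replicateCol Unit g * replicateRow Unit a + replicateCol Unit a * replicateRow Unit g).adjugate *ᵥ g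
      = g ⬝ᵥ H.adjugate *ᵥ g := by
  have h1 := bmat_det H g
  have h2 := bmat_det (H + replicateCol Unit g * replicateRow Unit a + replicateCol Unit a * replicateRow Unit g) g
  rw [bmat_conj] at h2
  rw [det_mul, det_mul, det_transpose] at h2
  rw [det_fromBlocks_zero₁₂, det_one, det_one, one_mul, mul_one, one_mul, h1] at h2
  linarith

end AlgebraAux

section CalcAux

variable {ι : Type*} [Fintype ι] [DecidableEq ι]

lemma contDiffOn_pd1 {f : (ι → ℝ) → ℝ} {s : Set (ι → ℝ)} (hs : IsOpen s)
    (hf : ContDiffOn ℝ (⊤ : ℕ∞) f s) (i : ι) : ContDiffOn ℝ (⊤ : ℕ∞) (pd1 f i) s := by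
  have h1 : ContDiffOn ℝ (⊤ : ℕ∞) (fderiv ℝ f) s :=
    hf.fderiv_of_isOpen hs (by simp)
  exact (ContinuousLinearMap.apply ℝ ℝ ((Pi.single i 1 : ι → ℝ))).contDiff.comp_contDiffOn h1

lemma contDiffOn_det {κ : Type*} [Fintype κ] [DecidableEq κ] {s : Set (ι → ℝ)}
    (M : (ι → ℝ) → Matrix κ κ ℝ) (h : ∀ i j, ContDiffOn ℝ (⊤ : ℕ∞) (fun x => M x i j) s) :
    ContDiffOn ℝ (⊤ : ℕ∞) (fun x => (M x).det) s := by
  simp only [Matrix.det_apply']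
  exact ContDiffOn.sum fun σ _ =>
    ContDiffOn.mul contDiffOn_const (contDiffOn_prod fun i _ => h (σ i) i)

lemma contDiffOn_adjugate {κ : Type*} [Fintype κ] [DecidableEq κ] {s : Set (ι → ℝ)}
    (M : (ι → ℝ) → Matrix κ κ ℝ) (h : ∀ i j, ContDiffOn ℝ (⊤ : ℕ∞) (fun x => M x i j) s)
    (i j : κ) : ContDiffOn ℝ (⊤ : ℕ∞) (fun x => (M x).adjugate i j) s := by
  simp only [Matrix.adjugate_apply]
  apply contDiffOn_det (fun x => (M x).updateRow j (Pi.single i 1))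
  intro k l
  by_cases hk : k = j
  · subst hk; simp only [Matrix.updateRow_self]; exact contDiffOn_const
  · simp only [Matrix.updateRow_ne hk]; exact h k l

lemma contDiffOn_hess {f : (ι → ℝ) → ℝ} {s : Set (ι → ℝ)} (hs : IsOpen s)
    (hf : ContDiffOn ℝ (⊤ : ℕ∞) f s) (i j : ι) :
    ContDiffOn ℝ (⊤ : ℕ∞) (fun x => hessM f x i j) s :=
  contDiffOn_pd1 hs (contDiffOn_pd1 hs hf j) i

lemma contDiffOn_Uval {f : (ι → ℝ) → ℝ} {s : Set (ι → ℝ)} (hs : IsOpen s)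
    (hf : ContDiffOn ℝ (⊤ : ℕ∞) f s) :
    ContDiffOn ℝ (⊤ : ℕ∞) (Uval f) s := by
  have hg : ∀ i, ContDiffOn ℝ (⊤ : ℕ∞) (fun x => gradv f x i) s :=
    fun i => contDiffOn_pd1 hs hf i
  have ha : ∀ i j, ContDiffOn ℝ (⊤ : ℕ∞) (fun x => (hessM f x).adjugate i j) s :=
    fun i j => contDiffOn_adjugate _ (contDiffOn_hess hs hf) i j
  have : Uval f = fun x => ∑ i, gradv f x i * ∑ j, (hessM f x).adjugate i j * gradv f x j := by
    funext x
    simp [Uval, Nvec, dotProduct, Matrix.mulVec]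
  rw [this]
  exact ContDiffOn.sum fun i _ => (hg i).mul
    (ContDiffOn.sum fun j _ => (ha i j).mul (hg j))

lemma pd1_congr {f g : (ι → ℝ) → ℝ} {x : ι → ℝ} (h : f =ᶠ[nhds x] g) (i : ι) :
    pd1 f i x = pd1 g i x := by
  unfold pd1; rw [h.fderiv_eq]

lemma pd1_mul {f g : (ι → ℝ) → ℝ} {x : ι → ℝ} (hf : DifferentiableAt ℝ f x)
    (hg : DifferentiableAt ℝ g x) (i : ι) :
    pd1 (fun y => f y * g y) i x = f x * pd1 g i x + g x * pd1 f i x := by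
  unfold pd1; rw [fderiv_fun_mul hf hg]; simp

lemma pd1_add {f g : (ι → ℝ) → ℝ} {x : ι → ℝ} (hf : DifferentiableAt ℝ f x)
    (hg : DifferentiableAt ℝ g x) (i : ι) :
    pd1 (fun y => f y + g y) i x = pd1 f i x + pd1 g i x := by
  unfold pd1; rw [fderiv_fun_add hf hg]; simp

lemma pd1_sub_const {f : (ι → ℝ) → ℝ} {x : ι → ℝ} (r : ℝ) (i : ι) :
    pd1 (fun y => f y - r) i x = pd1 f i x := by
  unfold pd1; rw [fderiv_sub_const]

end CalcAux
/-- Reilly: with `G = |U(F)|^{−1/(n+2)}·(F − r)`, along the level set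
`{F = r}` one has `U(G) = sign(U(F))`, so `|U(G)| = 1` there. -/
theorem stmt9 (n : ℕ) (hn : 1 ≤ n)
    (Ω : Set (Fin (n+1) → ℝ)) (hΩ : IsOpen Ω) (hΩconn : IsConnected Ω)
    (F : (Fin (n+1) → ℝ) → ℝ) (hF : ContDiffOn ℝ (⊤ : ℕ∞) F Ω)
    (hU : ∀ x ∈ Ω, Uval F x ≠ 0)
    (r : ℝ) (hr : r ∈ F '' Ω)
    (G : (Fin (n+1) → ℝ) → ℝ)
    (hG : ∀ x, G x = |Uval F x| ^ (-(1 : ℝ)/((n : ℝ)+2)) * (F x - r)) :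
    ∀ x ∈ Ω, F x = r → Uval G x = Real.sign (Uval F x) ∧ |Uval G x| = 1 := by
  classical
  set p : ℝ := -(1 : ℝ)/((n : ℝ)+2) with hp
  set u : (Fin (n+1) → ℝ) → ℝ := Uval F with hu_def
  set c : (Fin (n+1) → ℝ) → ℝ := fun x => (u x ^ 2) ^ (p/2) with hc_def
  have habs : ∀ t : ℝ, ∀ q : ℝ, (t ^ 2 : ℝ) ^ q = |t| ^ (2 * q) := by
    intro t q
    rw [← sq_abs, ← Real.rpow_natCast |t| 2, ← Real.rpow_mul (abs_nonneg t)]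
    norm_num
  have hGc : G = fun x => c x * (F x - r) := by
    funext x
    rw [hG x]
    congr 1
    rw [hc_def]
    simp only
    rw [habs (u x) (p/2)]
    congr 1
    ring
  -- smoothness
  have hu_smooth : ContDiffOn ℝ (⊤ : ℕ∞) u Ω := contDiffOn_Uval hΩ hF
  have hc_smooth : ContDiffOn ℝ (⊤ : ℕ∞) c Ω := by
    intro x hx
    have hx2 : u x ^ 2 ≠ 0 := pow_ne_zero _ (hU x hx)
    have h1 : ContDiffAt ℝ (⊤ : ℕ∞) (fun t : ℝ => t ^ (p/2)) (u x ^ 2) :=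
      Real.contDiffAt_rpow_const_of_ne hx2
    have h2 : ContDiffAt ℝ (⊤ : ℕ∞) (fun y => u y ^ 2) x :=
      ((hu_smooth x hx).contDiffAt (hΩ.mem_nhds hx)).pow 2
    exact (h1.comp x h2).contDiffWithinAt
  have hdiff : ∀ {f : (Fin (n+1) → ℝ) → ℝ}, ContDiffOn ℝ (⊤ : ℕ∞) f Ω →
      ∀ {y}, y ∈ Ω → DifferentiableAt ℝ f y := by
    intro f hf y hy
    exact ((hf y hy).contDiffAt (hΩ.mem_nhds hy)).differentiableAt (by simp)
  intro x₀ hx₀ hFx₀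
  set g : Fin (n+1) → ℝ := gradv F x₀ with hg_def
  set H : Matrix (Fin (n+1)) (Fin (n+1)) ℝ := hessM F x₀ with hH_def
  set a : Fin (n+1) → ℝ := fun i => pd1 c i x₀ with ha_def
  set c₀ : ℝ := c x₀ with hc₀_def
  have hu₀ : u x₀ ≠ 0 := hU x₀ hx₀
  have hc₀pos : 0 < c₀ := Real.rpow_pos_of_pos (by positivity) _
  -- first derivatives on Ω
  have gradG : ∀ y ∈ Ω, ∀ i, pd1 G i y = c y * pd1 F i y + (F y - r) * pd1 c i y := by
    intro y hy i
    rw [hGc]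
    rw [pd1_mul (hdiff hc_smooth hy) ((hdiff hF hy).sub_const r) i]
    rw [pd1_sub_const r i]
  have hgradG₀ : gradv G x₀ = c₀ • g := by
    funext i
    rw [show gradv G x₀ i = pd1 G i x₀ from rfl, gradG x₀ hx₀ i, hFx₀]
    simp [hg_def, gradv, hc₀_def]
  -- second derivatives at x₀
  have hessG : ∀ i j, pd1 (pd1 G j) i x₀ = c₀ * H i j + a j * g i + a i * g j := by
    intro i j
    have hev : pd1 G j =ᶠ[nhds x₀] fun y => c y * pd1 F j y + (F y - r) * pd1 c j y := by
      filter_upwards [hΩ.mem_nhds hx₀] with y hy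
      exact gradG y hy j
    rw [pd1_congr hev i]
    have d1 : DifferentiableAt ℝ (fun y => c y * pd1 F j y) x₀ :=
      (hdiff hc_smooth hx₀).mul (hdiff (contDiffOn_pd1 hΩ hF j) hx₀)
    have d2 : DifferentiableAt ℝ (fun y => (F y - r) * pd1 c j y) x₀ :=
      ((hdiff hF hx₀).sub_const r).mul (hdiff (contDiffOn_pd1 hΩ hc_smooth j) hx₀)
    rw [pd1_add d1 d2 i]
    rw [pd1_mul (hdiff hc_smooth hx₀) (hdiff (contDiffOn_pd1 hΩ hF j) hx₀) i]
    rw [pd1_mul ((hdiff hF hx₀).sub_const r) (hdiff (contDiffOn_pd1 hΩ hc_smooth j) hx₀) i]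
    rw [pd1_sub_const r i, hFx₀]
    have e1 : pd1 (pd1 F j) i x₀ = H i j := rfl
    have e2 : pd1 F j x₀ = g j := rfl
    have e3 : pd1 F i x₀ = g i := rfl
    rw [e1, e2, e3]
    simp only [sub_self, zero_mul, ha_def]
    ring
  set a' : Fin (n+1) → ℝ := fun i => c₀⁻¹ * a i with ha'_def
  set M : Matrix (Fin (n+1)) (Fin (n+1)) ℝ :=
    H + replicateCol Unit g * replicateRow Unit a' + replicateCol Unit a' * replicateRow Unit g with hM_def
  have hfac : hessM G x₀ = c₀ • M := by
    ext i j
    rw [show hessM G x₀ i j = pd1 (pd1 G j) i x₀ from rfl, hessG i j]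
    simp [hM_def, Matrix.add_apply, Matrix.smul_apply, Matrix.mul_apply, Matrix.replicateCol,
      Matrix.replicateRow, ha'_def]
    field_simp
  have hUG : Uval G x₀ = c₀ ^ (n+2) * (g ⬝ᵥ H.adjugate *ᵥ g) := by
    rw [Uval, Nvec, hgradG₀, hfac]
    rw [Matrix.adjugate_smul]
    have hcard : Fintype.card (Fin (n+1)) - 1 = n := by simp
    rw [hcard]
    rw [Matrix.smul_mulVec, Matrix.mulVec_smul, smul_dotProduct,
      dotProduct_smul, dotProduct_smul]
    rw [hM_def, adj_quad_invariant H g a']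
    simp only [smul_eq_mul]
    ring
  have hUF₀ : g ⬝ᵥ H.adjugate *ᵥ g = u x₀ := rfl
  have hcpow : c₀ ^ (n+2) = |u x₀|⁻¹ := by
    have hA : (0:ℝ) < |u x₀| := abs_pos.mpr hu₀
    have hcA : c₀ = |u x₀| ^ p := by
      rw [hc₀_def, hc_def]
      simp only
      rw [habs (u x₀) (p/2)]
      congr 1
      ring
    rw [hcA, ← Real.rpow_natCast (|u x₀| ^ p) (n+2), ← Real.rpow_mul (le_of_lt hA)]
    have hne : (n : ℝ) + 2 ≠ 0 := by positivity
    have : p * ((n+2 : ℕ) : ℝ) = -1 := by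
      rw [hp]
      push_cast
      field_simp
    rw [this, Real.rpow_neg_one]
  have hsign : |u x₀|⁻¹ * u x₀ = Real.sign (u x₀) := by
    rcases lt_or_gt_of_ne hu₀ with h | h
    · rw [Real.sign_of_neg h, abs_of_neg h]
      field_simp
    · rw [Real.sign_of_pos h, abs_of_pos h]
      field_simp
  have hfinal : Uval G x₀ = Real.sign (u x₀) := by
    rw [hUG, hUF₀, hcpow, hsign]
  refine ⟨hfinal, ?_⟩
  rw [hfinal]
  rcases lt_or_gt_of_ne hu₀ with h | h
  · rw [Real.sign_of_neg h]; norm_num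
  · rw [Real.sign_of_pos h]; norm_num
end

section
/- Let n ≥ 1, let F be a C^∞ function on a connected open set Ω ⊆ ℝ^{n+1} on which U(F) is nowhere zero, and define the 1-form ρ := −|U(F)|^{−1/(n+2)}·dF on Ω. Then the following are equivalent: (i) dU(F) ∧ dF = 0 on Ω (equivalently, U(F) is locally constant on each level set of F); (ii) dρ = 0 on Ω; (iii) μ(F) ∧ dF = 0 on Ω, where μ(F) = (n+2)⁻¹·d(log|U(F)|); (iv) at every point of Ω the vectors 𝔑(F) and N(F) are linearly dependent; (v) 𝔑(F) = −sign(U(F))·|U(F)|^{−(n+1)/(n+2)}·N(F) on Ω. -/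
open Matrix

/-- The matrix `σ(F)` of the context, computed with the choice `q = 1` (it is
independent of the choice of nonvanishing `q`). -/
noncomputable def sigmaF {n : ℕ} (F : (Fin (n+1) → ℝ) → ℝ) (x : Fin (n+1) → ℝ) :
    Matrix (Fin (n+1)) (Fin (n+1)) ℝ :=
  (hessM F x - ((Uval F x)⁻¹ * Hdet F x) • Matrix.vecMulVec (gradv F x) (gradv F x)
      + (Uval F x)⁻¹ • Matrix.vecMulVec (gradv F x) (gradv F x))⁻¹
    - (Uval F x)⁻¹ • Matrix.vecMulVec (Nvec F x) (Nvec F x)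

/-- The one-form `μ(F) = (n+2)⁻¹ ∇(log |U(F)|)`. -/
noncomputable def muF (n : ℕ) (F : (Fin (n+1) → ℝ) → ℝ) (x : Fin (n+1) → ℝ) :
    Fin (n+1) → ℝ :=
  ((n : ℝ) + 2)⁻¹ • gradv (fun y => Real.log |Uval F y|) x

/-- The equiaffine normal field
`𝔑(F) = −|U(F)|^{1/(n+2)} U(F)⁻¹ N(F) − |U(F)|^{1/(n+2)} σ(F) μ(F)`. -/
noncomputable def EANormal (n : ℕ) (F : (Fin (n+1) → ℝ) → ℝ) (x : Fin (n+1) → ℝ) :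
    Fin (n+1) → ℝ :=
  (-(|Uval F x| ^ ((1 : ℝ)/((n : ℝ)+2)) * (Uval F x)⁻¹)) • Nvec F x
    - (|Uval F x| ^ ((1 : ℝ)/((n : ℝ)+2))) • (sigmaF F x *ᵥ muF n F x)


theorem det_add_vecMulVec_s10 {m : Type*} [Fintype m] [DecidableEq m] (A : Matrix m m ℝ)
    (u v : m → ℝ) :
    (A + Matrix.vecMulVec u v).det = A.det + ∑ k, u k * (A.updateRow k v).det := by
  classical
  set f := (Matrix.detRowAlternating : (m → ℝ) [⋀^m]→ₗ[ℝ] ℝ) with hf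
  set m₁ : m → m → ℝ := fun i => u i • v with hm₁
  have hdet : (A + Matrix.vecMulVec u v).det
      = ∑ s : Finset m, f (s.piecewise m₁ fun i => A i) := by
    have hA : (A + Matrix.vecMulVec u v) = Matrix.of (m₁ + fun i => A i) := by
      ext i j
      simp [Matrix.vecMulVec_apply, m₁, smul_eq_mul]
      ring
    rw [hA]
    exact f.toMultilinearMap.map_add_univ m₁ (fun i => A i)
  rw [hdet]
  have hzero : ∀ s : Finset m, 1 < s.card → f (s.piecewise m₁ fun i => A i) = 0 := by
    intro s hs
    obtain ⟨i, hi, j, hj, hij⟩ := Finset.one_lt_card.mp hs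
    set w := s.piecewise m₁ (fun i => A i) with hw
    have hwi : w i = u i • v := s.piecewise_eq_of_mem _ _ hi
    have hwj : w j = u j • v := s.piecewise_eq_of_mem _ _ hj
    have e1 : w = Function.update w i (u i • v) := by rw [← hwi, Function.update_eq_self]
    rw [e1, f.map_update_smul]
    have e2 : Function.update w i v
        = Function.update (Function.update w i v) j (u j • v) := by
      funext k
      rcases eq_or_ne k j with rfl | hk
      · rw [Function.update_self, Function.update_of_ne hij.symm, hwj]
      · rw [Function.update_of_ne hk]
    rw [e2, f.map_update_smul]
    have h3 : Function.update (Function.update w i v) j v i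
        = Function.update (Function.update w i v) j v j := by
      simp [Function.update_of_ne hij, Function.update_self]
    rw [f.map_eq_zero_of_eq _ h3 hij, smul_zero, smul_zero]
  have hfilter : ∑ s : Finset m, f (s.piecewise m₁ fun i => A i)
      = ∑ s ∈ Finset.univ.filter (fun s : Finset m => s.card ≤ 1),
          f (s.piecewise m₁ fun i => A i) :=
    (Finset.sum_filter_of_ne (fun s _ hne => by
      by_contra h
      push_neg at h
      exact hne (hzero s h))).symm
  rw [hfilter]
  have hset : Finset.univ.filter (fun s : Finset m => s.card ≤ 1)
      = insert (∅ : Finset m) (Finset.univ.image fun k : m => ({k} : Finset m)) := by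
    ext s
    simp only [Finset.mem_filter, Finset.mem_univ, true_and, Finset.mem_insert,
      Finset.mem_image]
    constructor
    · intro hs1
      rcases Nat.le_one_iff_eq_zero_or_eq_one.mp hs1 with h | h
      · exact Or.inl (Finset.card_eq_zero.mp h)
      · obtain ⟨a, rfl⟩ := Finset.card_eq_one.mp h
        exact Or.inr ⟨a, rfl⟩
    · rintro (rfl | ⟨a, -, rfl⟩) <;> simp
  rw [hset, Finset.sum_insert (by simp), Finset.sum_image
    (fun a _ b _ h => Finset.singleton_injective h), Finset.piecewise_empty]
  congr 1
  refine Finset.sum_congr rfl fun k _ => ?_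
  rw [Finset.piecewise_singleton, f.map_update_smul, smul_eq_mul]
  congr 1

theorem contDiffAt_pd1 {ι : Type*} [Fintype ι] [DecidableEq ι] {f : (ι → ℝ) → ℝ}
    {x : ι → ℝ} (hf : ContDiffAt ℝ (⊤ : ℕ∞) f x) (j : ι) :
    ContDiffAt ℝ (⊤ : ℕ∞) (pd1 f j) x := by
  have h1 : ContDiffAt ℝ (⊤ : ℕ∞) (fderiv ℝ f) x :=
    hf.fderiv_right (by exact_mod_cast le_top)
  exact h1.clm_apply contDiffAt_const

theorem diffAt_finset_prod {E : Type*} [NormedAddCommGroup E] [NormedSpace ℝ E]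
    {ι' : Type*} (s : Finset ι') (f : ι' → E → ℝ) {x : E}
    (h : ∀ i ∈ s, DifferentiableAt ℝ (f i) x) :
    DifferentiableAt ℝ (fun y => ∏ i ∈ s, f i y) x := by
  classical
  induction s using Finset.induction with
  | empty => simpa using differentiableAt_const 1
  | @insert a t ha ih =>
    simp only [Finset.prod_insert ha]
    exact (h a (t.mem_insert_self a)).mul (ih fun i hi => h i (Finset.mem_insert_of_mem hi))

theorem differentiableAt_Uval {ι : Type*} [Fintype ι] [DecidableEq ι]
    {F : (ι → ℝ) → ℝ} {x : ι → ℝ} (hf : ContDiffAt ℝ (⊤ : ℕ∞) F x) :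
    DifferentiableAt ℝ (Uval F) x := by
  classical
  have hg : ∀ j, DifferentiableAt ℝ (fun y => gradv F y j) x := fun j =>
    ((contDiffAt_pd1 hf j).differentiableAt (by simp))
  have hh : ∀ i j, DifferentiableAt ℝ (fun y => hessM F y i j) x := fun i j =>
    ((contDiffAt_pd1 (contDiffAt_pd1 hf j) i).differentiableAt (by simp))
  have hadj : ∀ i j, DifferentiableAt ℝ (fun y => (hessM F y).adjugate i j) x := by
    intro i j
    have : (fun y => (hessM F y).adjugate i j)
        = fun y => ∑ σ : Equiv.Perm ι, (Equiv.Perm.sign σ : ℤ)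
            * ∏ k, (hessM F y).updateRow j (Pi.single i 1) (σ k) k := by
      funext y
      rw [Matrix.adjugate_apply, Matrix.det_apply]
      simp [Units.smul_def, zsmul_eq_mul]
    rw [this]
    refine DifferentiableAt.fun_sum fun σ _ => DifferentiableAt.const_mul ?_ _
    refine diffAt_finset_prod _ _ fun k _ => ?_
    rcases eq_or_ne (σ k) j with h | h
    · simpa [Matrix.updateRow_apply, h] using differentiableAt_const _
    · simpa [Matrix.updateRow_apply, h] using hh (σ k) k
  have : Uval F = fun y => ∑ i, gradv F y i * ∑ j, (hessM F y).adjugate i j * gradv F y j := by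
    funext y
    rfl
  rw [this]
  exact DifferentiableAt.fun_sum fun i _ => (hg i).mul
    (DifferentiableAt.fun_sum fun j _ => (hadj i j).mul (hg j))

theorem hess_symm_entries {ι : Type*} [Fintype ι] [DecidableEq ι]
    {F : (ι → ℝ) → ℝ} {x : ι → ℝ} (hf : ContDiffAt ℝ (⊤ : ℕ∞) F x) (i j : ι) :
    hessM F x i j = hessM F x j i := by
  have hdf : DifferentiableAt ℝ (fderiv ℝ F) x :=
    (hf.fderiv_right (m := (⊤ : ℕ∞)) (by exact_mod_cast le_top)).differentiableAt
      (by simp)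
  have key : ∀ a b : ι, pd1 (pd1 F b) a x
      = fderiv ℝ (fderiv ℝ F) x (Pi.single a 1) (Pi.single b 1) := by
    intro a b
    have : pd1 (pd1 F b) a x
        = fderiv ℝ (fun y => (fderiv ℝ F y) ((fun _ => (Pi.single b 1 : ι → ℝ)) y)) x
            (Pi.single a 1) := rfl
    rw [this, fderiv_clm_apply hdf (differentiableAt_const _)]
    simp
  have hsymm := hf.isSymmSndFDerivAt (by rw [minSmoothness_of_isRCLikeNormedField]; exact WithTop.coe_le_coe.mpr le_top)
  show pd1 (pd1 F j) i x = pd1 (pd1 F i) j x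
  rw [key i j, key j i, hsymm.eq]

theorem vecMulVec_mulVec_eq {ι : Type*} [Fintype ι] (u v w : ι → ℝ) :
    Matrix.vecMulVec u v *ᵥ w = (v ⬝ᵥ w) • u := by
  funext i
  simp only [Matrix.mulVec, Matrix.vecMulVec_apply, dotProduct, Pi.smul_apply, smul_eq_mul]
  rw [Finset.sum_mul]
  exact Finset.sum_congr rfl fun j _ => by ring

theorem vecMulVec_smul_left_s10 {ι : Type*} [Fintype ι] (c : ℝ) (u v : ι → ℝ) :
    Matrix.vecMulVec (c • u) v = c • Matrix.vecMulVec u v := by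
  ext i j
  simp [Matrix.vecMulVec_apply, mul_assoc]


section Point

variable {n : ℕ} {F : (Fin (n+1) → ℝ) → ℝ} {x : Fin (n+1) → ℝ}

theorem point_facts (hsym : (hessM F x)ᵀ = hessM F x) (hUx : Uval F x ≠ 0) :
    (sigmaF F x *ᵥ gradv F x = 0) ∧ ((sigmaF F x)ᵀ = sigmaF F x) ∧
      (∀ v : Fin (n+1) → ℝ, sigmaF F x *ᵥ v = 0 →
        v = ((Uval F x)⁻¹ * (Nvec F x ⬝ᵥ v)) • gradv F x) := by
  classical
  set g := gradv F x with hg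
  set Hs := hessM F x with hHs
  set N := Nvec F x with hN
  set U := Uval F x with hU
  set H := Hdet F x with hH
  set W := Matrix.vecMulVec g g with hW
  set M : Matrix (Fin (n+1)) (Fin (n+1)) ℝ := Hs - (U⁻¹ * H) • W + U⁻¹ • W with hM
  have hgN : g ⬝ᵥ N = U := rfl
  have hMN : M *ᵥ N = g := by
    have h1 : Hs *ᵥ N = H • g := by
      show hessM F x *ᵥ ((hessM F x).adjugate *ᵥ gradv F x) = H • g
      rw [Matrix.mulVec_mulVec, Matrix.mul_adjugate, Matrix.smul_mulVec,
        Matrix.one_mulVec]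
      rfl
    rw [hM, Matrix.add_mulVec, Matrix.sub_mulVec, Matrix.smul_mulVec,
      Matrix.smul_mulVec, h1, hW, vecMulVec_mulVec_eq, hgN]
    rw [smul_smul, smul_smul, inv_mul_cancel₀ hUx]
    have e1 : U⁻¹ * H * U = H := by field_simp
    rw [e1]
    simp
  have hdetM : M.det = 1 := by
    have hM2 : M = Hs + Matrix.vecMulVec ((U⁻¹ - U⁻¹ * H) • g) g := by
      rw [vecMulVec_smul_left_s10, hM]
      ext i j
      simp only [Matrix.add_apply, Matrix.sub_apply, Matrix.smul_apply, smul_eq_mul]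
      ring
    have hupd : ∀ k, (Hs.updateRow k g).det = N k := by
      intro k
      rw [← Matrix.cramer_transpose_apply, Matrix.cramer_eq_adjugate_mulVec, hsym]
      rfl
    rw [hM2, det_add_vecMulVec_s10]
    have : ∑ k, ((U⁻¹ - U⁻¹ * H) • g) k * (Hs.updateRow k g).det
        = (U⁻¹ - U⁻¹ * H) * U := by
      rw [← hgN, dotProduct, Finset.mul_sum]
      exact Finset.sum_congr rfl fun k _ => by rw [hupd]; simp; ring
    rw [this]
    show H + (U⁻¹ - U⁻¹ * H) * U = 1
    field_simp
    ring
  have hMunit : IsUnit M.det := by rw [hdetM]; exact isUnit_one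
  have hMinvg : M⁻¹ *ᵥ g = N := by
    rw [← hMN, Matrix.mulVec_mulVec, Matrix.nonsing_inv_mul _ hMunit, Matrix.one_mulVec]
  have hsig : sigmaF F x = M⁻¹ - U⁻¹ • Matrix.vecMulVec N N := rfl
  have hσg : sigmaF F x *ᵥ g = 0 := by
    rw [hsig, Matrix.sub_mulVec, Matrix.smul_mulVec, vecMulVec_mulVec_eq, hMinvg,
      dotProduct_comm, hgN, smul_smul, inv_mul_cancel₀ hUx, one_smul, sub_self]
  refine ⟨hσg, ?_, ?_⟩
  · have hMT : Mᵀ = M := by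
      rw [hM]
      have hWT : Wᵀ = W := by
        ext i j
        simp [hW, Matrix.vecMulVec_apply, mul_comm]
      rw [Matrix.transpose_add, Matrix.transpose_sub, Matrix.transpose_smul,
        Matrix.transpose_smul, hWT, hsym]
    rw [hsig, Matrix.transpose_sub, Matrix.transpose_smul, Matrix.transpose_nonsing_inv, hMT]
    congr 1
    ext i j
    simp [Matrix.vecMulVec_apply, mul_comm]
  · intro v hv
    rw [hsig, Matrix.sub_mulVec, Matrix.smul_mulVec, vecMulVec_mulVec_eq,
      sub_eq_zero] at hv
    have h1 : M *ᵥ (M⁻¹ *ᵥ v) = v := by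
      rw [Matrix.mulVec_mulVec, Matrix.mul_nonsing_inv _ hMunit, Matrix.one_mulVec]
    have h2 : M *ᵥ (M⁻¹ *ᵥ v) = ((Uval F x)⁻¹ * (Nvec F x ⬝ᵥ v)) • gradv F x := by
      rw [hv, Matrix.mulVec_smul, Matrix.mulVec_smul, hMN, smul_smul]
    exact h1.symm.trans h2

end Point


theorem hasFDerivAt_abs_rpow {E : Type*} [NormedAddCommGroup E] [NormedSpace ℝ E]
    {u : E → ℝ} {x : E} {L : E →L[ℝ] ℝ} (hu : HasFDerivAt u L x) (hx : u x ≠ 0) (α : ℝ) :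
    HasFDerivAt (fun y => |u y| ^ α) ((α * |u x| ^ α / u x) • L) x := by
  rcases hx.lt_or_gt with hneg | hpos
  · have hev : (fun y => (-u y) ^ α) =ᶠ[nhds x] (fun y => |u y| ^ α) := by
      filter_upwards [hu.continuousAt.eventually_lt continuousAt_const hneg] with y hy
      rw [abs_of_neg hy]
    have hd : HasFDerivAt (fun y => (-u y) ^ α) ((α * (-u x) ^ (α - 1)) • (-L)) x :=
      HasFDerivAt.rpow_const hu.neg (Or.inl (neg_ne_zero.mpr hx))
    have hcoef : (α * (-u x) ^ (α - 1)) • (-L) = (α * |u x| ^ α / u x) • L := by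
      rw [smul_neg, ← neg_smul]
      congr 1
      rw [abs_of_neg hneg, Real.rpow_sub (neg_pos.mpr hneg), Real.rpow_one]
      field_simp
    exact (hcoef ▸ hd).congr_of_eventuallyEq hev.symm
  · have hev : (fun y => (u y) ^ α) =ᶠ[nhds x] (fun y => |u y| ^ α) := by
      filter_upwards [continuousAt_const.eventually_lt hu.continuousAt hpos] with y hy
      rw [abs_of_pos hy]
    have hd : HasFDerivAt (fun y => (u y) ^ α) ((α * (u x) ^ (α - 1)) • L) x :=
      HasFDerivAt.rpow_const hu (Or.inl hx)
    have hcoef : (α * (u x) ^ (α - 1)) • L = (α * |u x| ^ α / u x) • L := by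
      congr 1
      rw [abs_of_pos hpos, Real.rpow_sub hpos, Real.rpow_one]
      field_simp
    exact (hcoef ▸ hd).congr_of_eventuallyEq hev.symm

theorem coef_eq (n : ℕ) {U : ℝ} (hU : U ≠ 0) :
    |U| ^ ((1:ℝ)/((n:ℝ)+2)) * U⁻¹ = Real.sign U * |U| ^ (-((n:ℝ)+1)/((n:ℝ)+2)) := by
  have hn2 : ((n:ℝ)+2) ≠ 0 := by positivity
  have he : -((n:ℝ)+1)/((n:ℝ)+2) = (1:ℝ)/((n:ℝ)+2) - 1 := by field_simp; ring
  have habs : (0:ℝ) < |U| := abs_pos.mpr hU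
  rw [he, Real.rpow_sub habs, Real.rpow_one]
  rcases hU.lt_or_gt with h | h
  · rw [Real.sign_of_neg h, abs_of_neg h]
    field_simp
  · rw [Real.sign_of_pos h, abs_of_pos h]
    field_simp

/-- equivalent characterizations, on a connected open set where `U(F)`
is nowhere zero, of `U(F)` being locally constant on the level sets of `F`:
(i) `dU(F) ∧ dF = 0`; (ii) the conormal `ρ = −|U(F)|^{−1/(n+2)} dF` is closed;
(iii) `μ(F) ∧ dF = 0`; (iv) `𝔑(F)` and `N(F)` are everywhere linearly dependent;
(v) `𝔑(F) = −sign(U(F)) |U(F)|^{−(n+1)/(n+2)} N(F)`. -/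
theorem stmt10 (n : ℕ) (hn : 1 ≤ n)
    (Ω : Set (Fin (n+1) → ℝ)) (hΩ : IsOpen Ω) (hΩconn : IsConnected Ω)
    (F : (Fin (n+1) → ℝ) → ℝ) (hF : ContDiffOn ℝ (⊤ : ℕ∞) F Ω)
    (hU : ∀ x ∈ Ω, Uval F x ≠ 0) :
    List.TFAE [
      (∀ x ∈ Ω, ∀ i j : Fin (n+1),
        gradv (Uval F) x i * gradv F x j = gradv (Uval F) x j * gradv F x i),
      (∀ x ∈ Ω, ∀ i j : Fin (n+1),
        pd1 (fun y => -(|Uval F y| ^ (-(1 : ℝ)/((n : ℝ)+2)) * gradv F y j)) i x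
          = pd1 (fun y => -(|Uval F y| ^ (-(1 : ℝ)/((n : ℝ)+2)) * gradv F y i)) j x),
      (∀ x ∈ Ω, ∀ i j : Fin (n+1),
        muF n F x i * gradv F x j = muF n F x j * gradv F x i),
      (∀ x ∈ Ω, ∃ a b : ℝ, ¬(a = 0 ∧ b = 0) ∧
        a • EANormal n F x + b • Nvec F x = 0),
      (∀ x ∈ Ω, EANormal n F x
        = (-(Real.sign (Uval F x) * |Uval F x| ^ (-((n : ℝ)+1)/((n : ℝ)+2)))) • Nvec F x)
    ] := by
  classical
  have hcd : ∀ x ∈ Ω, ContDiffAt ℝ (⊤ : ℕ∞) F x := fun x hx => hF.contDiffAt (hΩ.mem_nhds hx)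
  have hsymx : ∀ x ∈ Ω, (hessM F x)ᵀ = hessM F x := by
    intro x hx
    ext i j
    exact hess_symm_entries (hcd x hx) j i
  have hgne : ∀ x ∈ Ω, gradv F x ≠ 0 := by
    intro x hx h0
    exact hU x hx (by show gradv F x ⬝ᵥ Nvec F x = 0; rw [h0, zero_dotProduct])
  have hNne : ∀ x ∈ Ω, Nvec F x ≠ 0 := by
    intro x hx h0
    exact hU x hx (by show gradv F x ⬝ᵥ Nvec F x = 0; rw [h0, dotProduct_zero])
  have hUd : ∀ x ∈ Ω, DifferentiableAt ℝ (Uval F) x := fun x hx =>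
    differentiableAt_Uval (hcd x hx)
  have hfd : ∀ x : Fin (n+1) → ℝ, ∀ i, fderiv ℝ (Uval F) x (Pi.single i 1)
      = gradv (Uval F) x i := fun _ _ => rfl
  have hmu : ∀ x ∈ Ω, ∀ i, muF n F x i
      = (((n:ℝ)+2)⁻¹ * (Uval F x)⁻¹) * gradv (Uval F) x i := by
    intro x hx i
    have h1 : (fun y => Real.log |Uval F y|) = fun y => Real.log (Uval F y) :=
      funext fun y => Real.log_abs _
    have hlog : fderiv ℝ (fun y => Real.log |Uval F y|) x
        = (Uval F x)⁻¹ • fderiv ℝ (Uval F) x := by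
      rw [h1]
      exact (((hUd x hx).hasFDerivAt).log (hU x hx)).fderiv
    show ((n:ℝ)+2)⁻¹ * fderiv ℝ (fun y => Real.log |Uval F y|) x (Pi.single i 1) = _
    rw [hlog, ContinuousLinearMap.smul_apply, smul_eq_mul, hfd x i]
    ring
  have hα : (-(1:ℝ)/((n:ℝ)+2)) ≠ 0 := by
    apply div_ne_zero <;> norm_num
    positivity
  have hpd2 : ∀ x ∈ Ω, ∀ i j : Fin (n+1),
      pd1 (fun y => -(|Uval F y| ^ (-(1:ℝ)/((n:ℝ)+2)) * gradv F y j)) i x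
      = -((|Uval F x| ^ (-(1:ℝ)/((n:ℝ)+2))) * hessM F x i j
          + gradv F x j * (((-(1:ℝ)/((n:ℝ)+2)) * |Uval F x| ^ (-(1:ℝ)/((n:ℝ)+2)) / Uval F x)
              * gradv (Uval F) x i)) := by
    intro x hx i j
    have habs : HasFDerivAt (fun y => |Uval F y| ^ (-(1:ℝ)/((n:ℝ)+2)))
        (((-(1:ℝ)/((n:ℝ)+2)) * |Uval F x| ^ (-(1:ℝ)/((n:ℝ)+2)) / Uval F x)
          • fderiv ℝ (Uval F) x) x :=
      hasFDerivAt_abs_rpow (hUd x hx).hasFDerivAt (hU x hx) _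
    have hgj : HasFDerivAt (pd1 F j) (fderiv ℝ (pd1 F j) x) x :=
      ((contDiffAt_pd1 (hcd x hx) j).differentiableAt (by simp)).hasFDerivAt
    have hprod := (habs.mul hgj).neg
    have h2 : pd1 (fun y => -(|Uval F y| ^ (-(1:ℝ)/((n:ℝ)+2)) * gradv F y j)) i x
        = (-((|Uval F x| ^ (-(1:ℝ)/((n:ℝ)+2))) • fderiv ℝ (pd1 F j) x
            + pd1 F j x • (((-(1:ℝ)/((n:ℝ)+2)) * |Uval F x| ^ (-(1:ℝ)/((n:ℝ)+2)) / Uval F x)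
              • fderiv ℝ (Uval F) x))) (Pi.single i 1) := by
      show fderiv ℝ (fun y => -(|Uval F y| ^ (-(1:ℝ)/((n:ℝ)+2)) * pd1 F j y)) x (Pi.single i 1) = _
      exact congrArg (fun L => L (Pi.single i 1)) hprod.fderiv
    rw [h2]
    simp only [ContinuousLinearMap.neg_apply, ContinuousLinearMap.add_apply,
      ContinuousLinearMap.smul_apply, smul_eq_mul]
    rw [hfd x i]
    show -(_ * fderiv ℝ (pd1 F j) x (Pi.single i 1) + pd1 F j x * _) = _
    rfl
  tfae_have 1 ↔ 3 := by
    refine forall₂_congr fun x hx => ?_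
    have hc : (((n:ℝ)+2)⁻¹ * (Uval F x)⁻¹) ≠ 0 := by
      refine mul_ne_zero (inv_ne_zero ?_) (inv_ne_zero (hU x hx))
      positivity
    constructor
    · intro h i j
      rw [hmu x hx i, hmu x hx j]
      linear_combination (((n:ℝ)+2)⁻¹ * (Uval F x)⁻¹) * h i j
    · intro h i j
      refine mul_left_cancel₀ hc ?_
      have h0 := h i j
      rw [hmu x hx i, hmu x hx j] at h0
      linear_combination h0
  tfae_have 2 ↔ 1 := by
    refine forall₂_congr fun x hx => ?_
    have hcν : ((-(1:ℝ)/((n:ℝ)+2)) * |Uval F x| ^ (-(1:ℝ)/((n:ℝ)+2)) / Uval F x) ≠ 0 := by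
      apply div_ne_zero (mul_ne_zero hα _) (hU x hx)
      exact ne_of_gt (Real.rpow_pos_of_pos (abs_pos.mpr (hU x hx)) _)
    constructor
    · intro h i j
      refine mul_left_cancel₀ hcν ?_
      have h0 := h i j
      rw [hpd2 x hx i j, hpd2 x hx j i,
        hess_symm_entries (hcd x hx) i j] at h0
      linear_combination -h0
    · intro h i j
      rw [hpd2 x hx i j, hpd2 x hx j i, hess_symm_entries (hcd x hx) i j]
      linear_combination -(((-(1:ℝ)/((n:ℝ)+2)) * |Uval F x| ^ (-(1:ℝ)/((n:ℝ)+2)) / Uval F x)) * h i j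
  tfae_have 3 → 5 := by
    intro h3 x hx
    obtain ⟨hσg, hσT, hσker⟩ := point_facts (hsymx x hx) (hU x hx)
    obtain ⟨k, hk⟩ := Function.ne_iff.mp (hgne x hx)
    have hk' : gradv F x k ≠ 0 := hk
    have hμ : muF n F x = (muF n F x k / gradv F x k) • gradv F x := by
      funext i
      rw [Pi.smul_apply, smul_eq_mul, div_mul_eq_mul_div, eq_div_iff hk']
      linear_combination h3 x hx i k
    have hσμ : sigmaF F x *ᵥ muF n F x = 0 := by
      rw [hμ, Matrix.mulVec_smul, hσg, smul_zero]
    show (-(|Uval F x| ^ ((1:ℝ)/((n:ℝ)+2)) * (Uval F x)⁻¹)) • Nvec F x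
        - (|Uval F x| ^ ((1:ℝ)/((n:ℝ)+2))) • (sigmaF F x *ᵥ muF n F x) = _
    rw [hσμ, smul_zero, sub_zero, coef_eq n (hU x hx)]
  tfae_have 5 → 4 := by
    intro h5 x hx
    refine ⟨1, Real.sign (Uval F x) * |Uval F x| ^ (-((n:ℝ)+1)/((n:ℝ)+2)), by simp, ?_⟩
    rw [h5 x hx, one_smul, ← add_smul, neg_add_cancel, zero_smul]
  tfae_have 4 → 3 := by
    intro h4 x hx
    obtain ⟨hσg, hσT, hσker⟩ := point_facts (hsymx x hx) (hU x hx)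
    obtain ⟨a, b, hab, heq⟩ := h4 x hx
    have hs : (|Uval F x| ^ ((1:ℝ)/((n:ℝ)+2))) ≠ 0 :=
      ne_of_gt (Real.rpow_pos_of_pos (abs_pos.mpr (hU x hx)) _)
    have hEA : EANormal n F x
        = (-(|Uval F x| ^ ((1:ℝ)/((n:ℝ)+2)) * (Uval F x)⁻¹)) • Nvec F x
          - (|Uval F x| ^ ((1:ℝ)/((n:ℝ)+2))) • (sigmaF F x *ᵥ muF n F x) := rfl
    rcases eq_or_ne a 0 with rfl | ha
    · rw [zero_smul, zero_add] at heq
      have hb : b ≠ 0 := fun h0 => hab ⟨rfl, h0⟩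
      exact absurd ((smul_eq_zero.mp heq).resolve_left hb) (hNne x hx)
    · have has : a * (|Uval F x| ^ ((1:ℝ)/((n:ℝ)+2))) ≠ 0 := mul_ne_zero ha hs
      rw [hEA, smul_sub, smul_smul, smul_smul] at heq
      have h1 : (a * (|Uval F x| ^ ((1:ℝ)/((n:ℝ)+2)))) • (sigmaF F x *ᵥ muF n F x)
          = (a * (-(|Uval F x| ^ ((1:ℝ)/((n:ℝ)+2)) * (Uval F x)⁻¹)) + b) • Nvec F x := by
        rw [add_smul]
        have h0 : (a * (-(|Uval F x| ^ ((1:ℝ)/((n:ℝ)+2)) * (Uval F x)⁻¹))) • Nvec F x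
            + b • Nvec F x
            - (a * (|Uval F x| ^ ((1:ℝ)/((n:ℝ)+2)))) • (sigmaF F x *ᵥ muF n F x) = 0 := by
          rw [← heq]; abel
        exact (sub_eq_zero.mp h0).symm
      have hσμt : sigmaF F x *ᵥ muF n F x
          = ((a * (|Uval F x| ^ ((1:ℝ)/((n:ℝ)+2))))⁻¹
              * (a * (-(|Uval F x| ^ ((1:ℝ)/((n:ℝ)+2)) * (Uval F x)⁻¹)) + b)) • Nvec F x := by
        apply smul_right_injective (Fin (n+1) → ℝ) has
        show (a * (|Uval F x| ^ ((1:ℝ)/((n:ℝ)+2)))) • (sigmaF F x *ᵥ muF n F x)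
            = (a * (|Uval F x| ^ ((1:ℝ)/((n:ℝ)+2))))
                • (((a * (|Uval F x| ^ ((1:ℝ)/((n:ℝ)+2))))⁻¹
                  * (a * (-(|Uval F x| ^ ((1:ℝ)/((n:ℝ)+2)) * (Uval F x)⁻¹)) + b)) • Nvec F x)
        rw [h1, smul_smul]
        congr 1
        field_simp
      have hdot : gradv F x ⬝ᵥ (sigmaF F x *ᵥ muF n F x) = 0 := by
        rw [Matrix.dotProduct_mulVec, ← hσT, Matrix.vecMul_transpose, hσg,
          zero_dotProduct]
      have ht : ((a * (|Uval F x| ^ ((1:ℝ)/((n:ℝ)+2))))⁻¹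
            * (a * (-(|Uval F x| ^ ((1:ℝ)/((n:ℝ)+2)) * (Uval F x)⁻¹)) + b)) * Uval F x = 0 := by
        have h2 := hdot
        rw [hσμt, dotProduct_smul, smul_eq_mul] at h2
        exact h2
      have ht0 : ((a * (|Uval F x| ^ ((1:ℝ)/((n:ℝ)+2))))⁻¹
            * (a * (-(|Uval F x| ^ ((1:ℝ)/((n:ℝ)+2)) * (Uval F x)⁻¹)) + b)) = 0 :=
        (mul_eq_zero.mp ht).resolve_right (hU x hx)
      have hσμ0 : sigmaF F x *ᵥ muF n F x = 0 := by rw [hσμt, ht0, zero_smul]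
      have hμg := hσker _ hσμ0
      intro i j
      rw [hμg]
      simp only [Pi.smul_apply, smul_eq_mul]
      ring
  tfae_finish
end

section
/- Let n ≥ 1, let F be a C^∞ function on a connected open set Ω ⊆ ℝ^{n+1}, and suppose U(F) is equal on Ω to a nonzero constant κ. Then the equiaffine normal field satisfies 𝔑(F) = −|κ|^{1/(n+2)}·κ⁻¹·N(F) = −sign(κ)·|κ|^{−(n+1)/(n+2)}·N(F) on Ω, and ⟨∇F(x), 𝔑(F)(x)⟩ = −|κ|^{1/(n+2)} for all x ∈ Ω. Consequently, any differentiable curve φ : J → Ω (J ⊆ ℝ an interval containing 0) solving the affine normal flow φ′(t) = 𝔑(F)(φ(t)) satisfies F(φ(t)) = F(φ(0)) − |κ|^{1/(n+2)}·t for all t ∈ J; in particular the flow of 𝔑(F) carries level sets of F to level sets of F. -/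
open Matrix

lemma fderiv_apply_dot {n : ℕ} (F : (Fin (n+1) → ℝ) → ℝ) (x v : Fin (n+1) → ℝ) :
    fderiv ℝ F x v = gradv F x ⬝ᵥ v := by
  conv_lhs => rw [show v = ∑ i, v i • (Pi.single i 1 : Fin (n+1) → ℝ) by
    ext j; simp [Pi.single_apply]]
  simp only [map_sum, _root_.map_smul, smul_eq_mul]
  simp [dotProduct, gradv, pd1, mul_comm]

/-- if `U(F) ≡ κ ≠ 0` on `Ω` then
`𝔑(F) = −|κ|^{1/(n+2)} κ⁻¹ N(F) = −sign(κ)|κ|^{−(n+1)/(n+2)} N(F)`,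
`⟨∇F, 𝔑(F)⟩ = −|κ|^{1/(n+2)}`, and any solution of the affine normal flow
`φ' = 𝔑(F)∘φ` satisfies `F(φ(t)) = F(φ(0)) − |κ|^{1/(n+2)} t`, so the flow carries
level sets of `F` to level sets of `F`. -/
theorem stmt12 (n : ℕ) (hn : 1 ≤ n)
    (Ω : Set (Fin (n+1) → ℝ)) (hΩ : IsOpen Ω) (hΩconn : IsConnected Ω)
    (F : (Fin (n+1) → ℝ) → ℝ) (hF : ContDiffOn ℝ (⊤ : ℕ∞) F Ω)
    (κ : ℝ) (hκ : κ ≠ 0) (hUκ : ∀ x ∈ Ω, Uval F x = κ) :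
    (∀ x ∈ Ω, EANormal n F x = (-(|κ| ^ ((1 : ℝ)/((n : ℝ)+2)) * κ⁻¹)) • Nvec F x) ∧
    ((-(|κ| ^ ((1 : ℝ)/((n : ℝ)+2)) * κ⁻¹))
      = -(Real.sign κ * |κ| ^ (-((n : ℝ)+1)/((n : ℝ)+2)))) ∧
    (∀ x ∈ Ω, gradv F x ⬝ᵥ EANormal n F x = -|κ| ^ ((1 : ℝ)/((n : ℝ)+2))) ∧
    (∀ J : Set ℝ, J.OrdConnected → (0 : ℝ) ∈ J →
      ∀ φ : ℝ → (Fin (n+1) → ℝ), (∀ t ∈ J, φ t ∈ Ω) →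
        (∀ t ∈ J, HasDerivWithinAt φ (EANormal n F (φ t)) J t) →
        ∀ t ∈ J, F (φ t) = F (φ 0) - |κ| ^ ((1 : ℝ)/((n : ℝ)+2)) * t) := by
  have hbpos : 0 < |κ| := abs_pos.2 hκ
  -- μ(F) vanishes on Ω
  have hmu : ∀ x ∈ Ω, muF n F x = 0 := by
    intro x hx
    have heq : (fun y => Real.log |Uval F y|) =ᶠ[nhds x]
        (fun _ => Real.log |κ|) := by
      filter_upwards [hΩ.mem_nhds hx] with y hy
      rw [hUκ y hy]
    have hfd : fderiv ℝ (fun y => Real.log |Uval F y|) x = 0 := by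
      rw [heq.fderiv_eq, fderiv_fun_const]; rfl
    have hg : gradv (fun y => Real.log |Uval F y|) x = 0 := by
      ext i; simp only [gradv, pd1, hfd]; rfl
    unfold muF
    rw [hg, smul_zero]
  have h1 : ∀ x ∈ Ω, EANormal n F x
      = (-(|κ| ^ ((1 : ℝ)/((n : ℝ)+2)) * κ⁻¹)) • Nvec F x := by
    intro x hx
    unfold EANormal
    rw [hmu x hx, hUκ x hx]
    simp [Matrix.mulVec_zero]
  refine ⟨h1, ?_, ?_, ?_⟩
  · -- sign identity
    have hinv : κ⁻¹ = Real.sign κ * |κ|⁻¹ := by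
      rcases hκ.lt_or_gt with h | h
      · rw [Real.sign_of_neg h, abs_of_neg h]; field_simp
      · rw [Real.sign_of_pos h, abs_of_pos h]; ring
    have hexp : (1 : ℝ)/((n : ℝ)+2) + (-1) = -((n : ℝ)+1)/((n : ℝ)+2) := by
      have hne : ((n : ℝ) + 2) ≠ 0 := by positivity
      field_simp
      ring
    rw [hinv, ← Real.rpow_neg_one |κ|, ← mul_assoc,
      mul_comm (|κ| ^ ((1 : ℝ)/((n : ℝ)+2))) (Real.sign κ), mul_assoc,
      ← Real.rpow_add hbpos, hexp]
  · intro x hx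
    rw [h1 x hx, dotProduct_smul]
    have : gradv F x ⬝ᵥ Nvec F x = κ := hUκ x hx
    rw [this, smul_eq_mul]
    field_simp
  · intro J hJ h0J φ hφΩ hφ'
    set c : ℝ := |κ| ^ ((1 : ℝ)/((n : ℝ)+2)) with hc
    have hder : ∀ t ∈ J, HasDerivWithinAt (fun s => F (φ s) + c * s) 0 J t := by
      intro t ht
      have hdiff : DifferentiableAt ℝ F (φ t) :=
        (hF.contDiffAt (hΩ.mem_nhds (hφΩ t ht))).differentiableAt (by norm_num)
      have hcomp : HasDerivWithinAt (fun s => F (φ s))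
          (fderiv ℝ F (φ t) (EANormal n F (φ t))) J t :=
        hdiff.hasFDerivAt.comp_hasDerivWithinAt t (hφ' t ht)
      have hval : fderiv ℝ F (φ t) (EANormal n F (φ t)) = -c := by
        rw [fderiv_apply_dot, h1 (φ t) (hφΩ t ht), dotProduct_smul,
          show gradv F (φ t) ⬝ᵥ Nvec F (φ t) = κ from hUκ (φ t) (hφΩ t ht),
          smul_eq_mul]
        field_simp
      rw [hval] at hcomp
      have hlin : HasDerivWithinAt (fun s : ℝ => c * s) c J t := by
        simpa using ((hasDerivAt_id t).const_mul c).hasDerivWithinAt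
      simpa using hcomp.fun_add hlin
    intro t ht
    have hconv : Convex ℝ J := hJ.convex
    have := hconv.norm_image_sub_le_of_norm_hasDerivWithin_le (C := 0) hder
      (fun x _ => by simp) h0J ht
    have heq : F (φ t) + c * t = F (φ 0) + c * 0 := by
      have h0 : ‖(F (φ t) + c * t) - (F (φ 0) + c * 0)‖ ≤ 0 := by
        simpa using this
      have := norm_nonneg ((F (φ t) + c * t) - (F (φ 0) + c * 0))
      have hz : ‖(F (φ t) + c * t) - (F (φ 0) + c * 0)‖ = 0 := le_antisymm h0 this
      have := norm_eq_zero.mp hz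
      linarith [sub_eq_zero.mp this]
    linarith [heq]
end

section
/- Let n ≥ 1, let λ ∈ ℝ, and let F be a C^∞ function on ℝ^{n+1} ∖ {0} that is positively homogeneous of degree λ, i.e. F(tx) = t^λ·F(x) for all t > 0 and x ≠ 0. Then for every x ≠ 0: (λ−1)·N(F)(x) = H(F)(x)·x and (λ−1)·U(F)(x) = λ·H(F)(x)·F(x). -/
open Matrix

/-- Decomposition of a vector into basis vectors. -/
lemma vec_eq_sum_single {ι : Type*} [Fintype ι] [DecidableEq ι] (x : ι → ℝ) :
    x = ∑ i, x i • (Pi.single i 1 : ι → ℝ) := by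
  ext j
  simp [Finset.sum_apply, Pi.single_apply]

/-- Euler's identity for positively homogeneous functions. -/
lemma euler_aux {ι : Type*} [Fintype ι] [DecidableEq ι]
    (G : (ι → ℝ) → ℝ) (mu : ℝ)
    (hhom : ∀ t : ℝ, 0 < t → ∀ x : ι → ℝ, x ≠ 0 → G (t • x) = t ^ mu * G x)
    (x : ι → ℝ) (hx : x ≠ 0) (hG : DifferentiableAt ℝ G x) :
    gradv G x ⬝ᵥ x = mu * G x := by
  -- derivative of t ↦ G (t • x) at 1 equals fderiv G x x
  have hs : HasDerivAt (fun t : ℝ => t • x) x 1 := by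
    simpa using (hasDerivAt_id (1 : ℝ)).smul_const x
  have hGx : HasFDerivAt G (fderiv ℝ G x) ((fun t : ℝ => t • x) 1) := by
    simpa using hG.hasFDerivAt
  have h1 : HasDerivAt (fun t : ℝ => G (t • x)) (fderiv ℝ G x x) 1 := by
    exact hGx.comp_hasDerivAt 1 hs
  -- derivative of t ↦ t ^ mu * G x at 1 equals mu * G x
  have h3 : HasDerivAt (fun t : ℝ => t ^ mu * G x) (mu * G x) 1 := by
    have := (Real.hasDerivAt_rpow_const (x := 1) (p := mu) (Or.inl one_ne_zero)).mul_const (G x)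
    simpa using this
  have h2 : (fun t : ℝ => t ^ mu * G x) =ᶠ[nhds 1] (fun t : ℝ => G (t • x)) := by
    filter_upwards [eventually_gt_nhds one_pos] with t ht
    exact (hhom t ht x hx).symm
  have h1' : HasDerivAt (fun t : ℝ => G (t • x)) (mu * G x) 1 :=
    h3.congr_of_eventuallyEq h2.symm
  have key : fderiv ℝ G x x = mu * G x := h1.unique h1'
  calc gradv G x ⬝ᵥ x = ∑ i, x i * fderiv ℝ G x (Pi.single i 1) := by
        simp [dotProduct, gradv, pd1, mul_comm]
    _ = fderiv ℝ G x (∑ i, x i • (Pi.single i 1 : ι → ℝ)) := by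
        rw [map_sum]; simp
    _ = fderiv ℝ G x x := by rw [← vec_eq_sum_single]
    _ = mu * G x := key

/-- for `F` positively homogeneous of degree `λ` on `ℝ^{n+1} ∖ {0}`,
`(λ−1) N(F) = H(F)·x` and `(λ−1) U(F) = λ H(F) F`. -/
theorem stmt13 (n : ℕ) (hn : 1 ≤ n)
    (F : (Fin (n+1) → ℝ) → ℝ)
    (hF : ContDiffOn ℝ (⊤ : ℕ∞) F {x : Fin (n+1) → ℝ | x ≠ 0})
    (lam : ℝ)
    (hhom : ∀ t : ℝ, 0 < t → ∀ x : Fin (n+1) → ℝ, x ≠ 0 →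
      F (t • x) = t ^ lam * F x) :
    ∀ x : Fin (n+1) → ℝ, x ≠ 0 →
      (lam - 1) • Nvec F x = Hdet F x • x ∧
      (lam - 1) * Uval F x = lam * Hdet F x * F x := by
  have hΩ : IsOpen {x : Fin (n+1) → ℝ | x ≠ 0} := isOpen_ne
  -- differentiability facts
  have hle1 : (1 : WithTop ℕ∞) ≤ ((⊤ : ℕ∞) : WithTop ℕ∞) := by
    exact_mod_cast le_top
  have hleA : ((⊤ : ℕ∞) : WithTop ℕ∞) + 1 ≤ ((⊤ : ℕ∞) : WithTop ℕ∞) := by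
    exact_mod_cast le_top
  have hdiff : ∀ x : Fin (n+1) → ℝ, x ≠ 0 → DifferentiableAt ℝ F x := fun x hx =>
    ((hF.contDiffAt (hΩ.mem_nhds hx)).differentiableAt (by simp))
  have hfd : ContDiffOn ℝ (⊤ : ℕ∞) (fderiv ℝ F) {x : Fin (n+1) → ℝ | x ≠ 0} :=
    hF.fderiv_of_isOpen hΩ hleA
  have hpd : ∀ j : Fin (n+1), ContDiffOn ℝ (⊤ : ℕ∞) (pd1 F j) {x : Fin (n+1) → ℝ | x ≠ 0} := by
    intro j
    have : ContDiffOn ℝ (⊤ : ℕ∞)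
        (fun y => (ContinuousLinearMap.apply ℝ ℝ (Pi.single j 1 : Fin (n+1) → ℝ)) (fderiv ℝ F y))
        {x : Fin (n+1) → ℝ | x ≠ 0} :=
      (ContinuousLinearMap.apply ℝ ℝ (Pi.single j 1 : Fin (n+1) → ℝ)).contDiff.comp_contDiffOn hfd
    exact this
  have hpddiff : ∀ (j : Fin (n+1)) (x : Fin (n+1) → ℝ), x ≠ 0 → DifferentiableAt ℝ (pd1 F j) x :=
    fun j x hx => ((hpd j).contDiffAt (hΩ.mem_nhds hx)).differentiableAt (by simp)
  -- homogeneity of partial derivatives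
  have hpdhom : ∀ (i : Fin (n+1)) (t : ℝ), 0 < t → ∀ x : Fin (n+1) → ℝ, x ≠ 0 →
      pd1 F i (t • x) = t ^ (lam - 1) * pd1 F i x := by
    intro i t ht x hx
    have htx : t • x ≠ 0 := smul_ne_zero (ne_of_gt ht) hx
    have heq : (fun y => F (t • y)) =ᶠ[nhds x] (fun y => t ^ lam * F y) := by
      filter_upwards [hΩ.mem_nhds hx] with y hy
      exact hhom t ht y hy
    have hinner : DifferentiableAt ℝ (fun y : Fin (n+1) → ℝ => t • y) x :=
      (differentiable_id.const_smul t).differentiableAt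
    have hcomp : fderiv ℝ (fun y => F (t • y)) x =
        (fderiv ℝ F (t • x)).comp (t • ContinuousLinearMap.id ℝ (Fin (n+1) → ℝ)) := by
      have h1 : fderiv ℝ (fun y : Fin (n+1) → ℝ => t • y) x
          = t • ContinuousLinearMap.id ℝ (Fin (n+1) → ℝ) := by
        rw [fderiv_fun_const_smul differentiableAt_fun_id t, fderiv_id']
      rw [← h1]
      exact fderiv_comp x (hdiff _ htx) hinner
    have hrhs : fderiv ℝ (fun y => t ^ lam * F y) x = t ^ lam • fderiv ℝ F x :=
      fderiv_const_mul (hdiff x hx) _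
    have hfe := Filter.EventuallyEq.fderiv_eq (𝕜 := ℝ) heq
    rw [hcomp, hrhs] at hfe
    have happ := congrFun (congrArg (fun (L : (Fin (n+1) → ℝ) →L[ℝ] ℝ) => fun v => L v) hfe)
      (Pi.single i 1)
    simp only [ContinuousLinearMap.comp_apply, ContinuousLinearMap.smul_apply,
      ContinuousLinearMap.coe_smul', Pi.smul_apply, ContinuousLinearMap.id_apply,
      smul_eq_mul] at happ
    -- happ : fderiv F (t•x) (t • single i 1) = t^lam * fderiv F x (single i 1)
    have happ' : t * pd1 F i (t • x) = t ^ lam * pd1 F i x := by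
      have h := happ
      rw [ContinuousLinearMap.map_smul] at h
      simpa [pd1, smul_eq_mul] using h
    have htne : t ≠ 0 := ne_of_gt ht
    have hpow : t ^ (lam - 1) = t ^ lam / t := by
      rw [Real.rpow_sub ht, Real.rpow_one]
    rw [hpow]
    field_simp
    linarith [happ']
  -- main proof
  intro x hx
  have hEuler1 : gradv F x ⬝ᵥ x = lam * F x :=
    euler_aux F lam hhom x hx (hdiff x hx)
  have hEuler2 : ∀ j : Fin (n+1), gradv (pd1 F j) x ⬝ᵥ x = (lam - 1) * pd1 F j x := by
    intro j
    exact euler_aux (pd1 F j) (lam - 1)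
      (fun t ht y hy => hpdhom j t ht y hy) x hx (hpddiff j x hx)
  -- symmetry of the Hessian
  have hdiff2 : DifferentiableAt ℝ (fderiv ℝ F) x :=
    ((hfd.contDiffAt (hΩ.mem_nhds hx)).differentiableAt (by simp))
  have hhess_eq : ∀ i j : Fin (n+1), hessM F x i j
      = fderiv ℝ (fderiv ℝ F) x (Pi.single i 1) (Pi.single j 1) := by
    intro i j
    have hc : HasFDerivAt (fun y => (ContinuousLinearMap.apply ℝ ℝ
          (Pi.single j 1 : Fin (n+1) → ℝ)) (fderiv ℝ F y))
        ((ContinuousLinearMap.apply ℝ ℝ (Pi.single j 1 : Fin (n+1) → ℝ)).comp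
          (fderiv ℝ (fderiv ℝ F) x)) x :=
      (ContinuousLinearMap.apply ℝ ℝ (Pi.single j 1 : Fin (n+1) → ℝ)).hasFDerivAt.comp x
        hdiff2.hasFDerivAt
    have : fderiv ℝ (pd1 F j) x = (ContinuousLinearMap.apply ℝ ℝ
        (Pi.single j 1 : Fin (n+1) → ℝ)).comp (fderiv ℝ (fderiv ℝ F) x) := hc.fderiv
    simp only [hessM, Matrix.of_apply, pd1]
    rw [this]
    rfl
  have hsymm : ∀ i j : Fin (n+1), hessM F x i j = hessM F x j i := by
    intro i j
    have hca : ContDiffAt ℝ (⊤ : ℕ∞) F x := hF.contDiffAt (hΩ.mem_nhds hx)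
    have hsy : IsSymmSndFDerivAt ℝ F x := by
      apply hca.isSymmSndFDerivAt
      rw [show ((2 : WithTop ℕ∞)) = ((2 : ℕ∞) : WithTop ℕ∞) by norm_cast]
      rw [minSmoothness_of_isRCLikeNormedField]
      exact WithTop.coe_le_coe.mpr le_top
    rw [hhess_eq i j, hhess_eq j i]
    exact hsy _ _
  -- Hessian times x
  have hmv : hessM F x *ᵥ x = (lam - 1) • gradv F x := by
    funext j
    have h2 := hEuler2 j
    have : (hessM F x *ᵥ x) j = gradv (pd1 F j) x ⬝ᵥ x := by
      simp only [mulVec, dotProduct, gradv]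
      apply Finset.sum_congr rfl
      intro i _
      rw [hsymm j i]
      rfl
    rw [this, h2]
    simp [gradv]
  constructor
  · -- first identity
    have : (lam - 1) • Nvec F x
        = (hessM F x).adjugate *ᵥ ((lam - 1) • gradv F x) := by
      simp [Nvec, Matrix.mulVec_smul]
    rw [this, ← hmv, Matrix.mulVec_mulVec, Matrix.adjugate_mul,
      Matrix.smul_mulVec, Matrix.one_mulVec, Hdet]
  · -- second identity
    have h1 : (lam - 1) * Uval F x = gradv F x ⬝ᵥ ((lam - 1) • Nvec F x) := by
      simp only [Uval, dotProduct, Pi.smul_apply, smul_eq_mul, Finset.mul_sum]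
      apply Finset.sum_congr rfl
      intro i _
      ring
    have h2 : (lam - 1) • Nvec F x = Hdet F x • x := by
      have : (lam - 1) • Nvec F x
          = (hessM F x).adjugate *ᵥ ((lam - 1) • gradv F x) := by
        simp [Nvec, Matrix.mulVec_smul]
      rw [this, ← hmv, Matrix.mulVec_mulVec, Matrix.adjugate_mul,
        Matrix.smul_mulVec, Matrix.one_mulVec, Hdet]
    rw [h1, h2, dotProduct_smul, smul_eq_mul, hEuler1]
    ring
end
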